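/- arXiv:1102.1493 — 4 statements merged into one kernel-verified Lean document; each statement's English description precedes it below -/
import Mathlib

section
/- Let λ ∈ ℂ with λ ≠ 0 and λ ≠ 1, let k ∈ ℤ, and let n ≥ 1 be an integer. Then 2πik − log λ ≠ 0 and ∫_0^1 λ^x · 𝓑_n(x;λ) · e^{−2πikx} dx = −n!/(2πik − log λ)^n. -/
noncomputable def ABnum (lam : ℂ) : ℕ → ℂ
  | 0 => 0
  | n + 1 =>
    ((if n = 0 then 1 else 0) -
        lam * ∑ k ∈ (Finset.range (n + 1)).attach,
          (((n + 1).choose k.1 : ℕ) : ℂ) * ABnum lam k.1) / (lam - 1)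
decreasing_by exact Finset.mem_range.mp k.2

/-- The Apostol–Bernoulli polynomial `𝓑_n(x;λ)`. -/
noncomputable def ABpoly (lam : ℂ) (n : ℕ) (x : ℂ) : ℂ :=
  ∑ k ∈ Finset.range (n + 1), ((n.choose k : ℕ) : ℂ) * ABnum lam k * x ^ (n - k)

lemma ABnum_rec (lam : ℂ) (hlam1 : lam ≠ 1) (m : ℕ) :
    (lam - 1) * ABnum lam (m + 1) =
      (if m = 0 then 1 else 0) -
        lam * ∑ k ∈ Finset.range (m + 1), (((m + 1).choose k : ℕ) : ℂ) * ABnum lam k := by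
  rw [ABnum, Finset.sum_attach (Finset.range (m+1)) (fun k => (((m + 1).choose k : ℕ) : ℂ) * ABnum lam k)]
  field_simp [sub_ne_zero.mpr hlam1]

lemma ABpoly_zero (lam : ℂ) (n : ℕ) : ABpoly lam n 0 = ABnum lam n := by
  rw [ABpoly, Finset.sum_eq_single n]
  · simp
  · intro k hk hkn
    have : k < n := Nat.lt_of_le_of_ne (Nat.lt_succ_iff.mp (Finset.mem_range.mp hk)) hkn
    simp [Nat.sub_ne_zero_of_lt this, zero_pow]
  · simp

lemma ABpoly_one (lam : ℂ) (n : ℕ) :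
    ABpoly lam n 1 = ∑ k ∈ Finset.range (n + 1), ((n.choose k : ℕ) : ℂ) * ABnum lam k := by
  simp [ABpoly]

lemma boundary (lam : ℂ) (hlam1 : lam ≠ 1) (m : ℕ) :
    lam * ABpoly lam (m + 1) 1 - ABnum lam (m + 1) = if m = 0 then 1 else 0 := by
  rw [ABpoly_one, Finset.sum_range_succ]
  have h := ABnum_rec lam hlam1 m
  simp only [Nat.choose_self, Nat.cast_one, one_mul]
  linear_combination h + lam * (∑ k ∈ Finset.range (m + 1), (((m + 1).choose k : ℕ) : ℂ) * ABnum lam k)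
    - lam * ABnum lam (m+1) * 0

lemma choose_id (m k : ℕ) (hk : k ≤ m) :
    ((m + 1 - k : ℕ) : ℂ) * (((m + 1).choose k : ℕ) : ℂ) = ((m : ℂ) + 1) * ((m.choose k : ℕ) : ℂ) := by
  have h : (m + 1 - k) * (m + 1).choose k = (m + 1) * m.choose k := by
    rw [mul_comm, ← Nat.choose_succ_right_eq]
    exact (Nat.add_one_mul_choose_eq m k).symm
  calc ((m + 1 - k : ℕ) : ℂ) * (((m + 1).choose k : ℕ) : ℂ)
      = (((m + 1 - k) * (m + 1).choose k : ℕ) : ℂ) := by push_cast [Nat.cast_mul]; ring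
    _ = (((m + 1) * m.choose k : ℕ) : ℂ) := by rw [h]
    _ = ((m : ℂ) + 1) * ((m.choose k : ℕ) : ℂ) := by push_cast; ring

lemma ABpoly_hasDerivAt (lam : ℂ) (m : ℕ) (x : ℂ) :
    HasDerivAt (ABpoly lam (m + 1)) (((m : ℂ) + 1) * ABpoly lam m x) x := by
  have h : HasDerivAt (ABpoly lam (m + 1))
      (∑ k ∈ Finset.range (m + 2),
        ((m + 1).choose k : ℂ) * ABnum lam k * (((m + 1 - k : ℕ) : ℂ) * x ^ (m + 1 - k - 1))) x := by
    apply HasDerivAt.fun_sum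
    intro k _
    exact (hasDerivAt_pow (m + 1 - k) x).const_mul _
  convert h using 1
  rw [Finset.sum_range_succ]
  simp only [Nat.sub_self, Nat.cast_zero, zero_mul, mul_zero, add_zero]
  rw [ABpoly, Finset.mul_sum]
  apply Finset.sum_congr rfl
  intro k hk
  have hk' : k ≤ m := Nat.lt_succ_iff.mp (Finset.mem_range.mp hk)
  have he : m + 1 - k - 1 = m - k := by omega
  rw [he]
  linear_combination (-(ABnum lam k * x ^ (m - k))) * choose_id m k hk'

lemma ABpoly_continuous (lam : ℂ) (n : ℕ) : Continuous fun x : ℝ => ABpoly lam n (x : ℂ) := by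
  unfold ABpoly
  fun_prop

lemma key (lam : ℂ) (hlam0 : lam ≠ 0) (hlam1 : lam ≠ 1) (μ : ℂ) (hμ : μ ≠ 0)
    (hexp : Complex.exp (-μ) = lam) (n : ℕ) :
    ∫ x : ℝ in (0:ℝ)..1, Complex.exp (-μ * x) * ABpoly lam n x
      = if n = 0 then 0 else -(n.factorial : ℂ) / μ ^ n := by
  induction n with
  | zero => simp [ABpoly, ABnum]
  | succ m ih =>
    have hcontexp : Continuous fun x : ℝ => Complex.exp (-μ * x) := by fun_prop
    set v : ℝ → ℂ := fun x =>
      -((-μ * Complex.exp (-μ * x)) * ABpoly lam (m+1) x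
          + Complex.exp (-μ * x) * (((m : ℂ) + 1) * ABpoly lam m x)) / μ with hv
    have hderiv : ∀ x ∈ Set.uIcc (0:ℝ) 1,
        HasDerivAt (fun x : ℝ => -Complex.exp (-μ * x) * ABpoly lam (m+1) x / μ) (v x) x := by
      intro x _
      have h1 : HasDerivAt (fun z : ℂ => Complex.exp (-μ * z)) (-μ * Complex.exp (-μ * x)) x := by
        simpa [mul_comm] using ((hasDerivAt_id (x:ℂ)).const_mul (-μ)).cexp
      have h2 := ABpoly_hasDerivAt lam m (x : ℂ)
      have := ((h1.mul h2).neg.div_const μ).comp_ofReal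
      simpa [hv, neg_mul] using this
    have hvcont : Continuous v := by
      apply Continuous.div_const
      apply Continuous.neg
      apply Continuous.add
      · exact (continuous_const.mul hcontexp).mul (ABpoly_continuous lam (m+1))
      · exact hcontexp.mul (continuous_const.mul (ABpoly_continuous lam m))
    have hint : ∫ x : ℝ in (0:ℝ)..1, v x =
        (-Complex.exp (-μ * 1) * ABpoly lam (m+1) 1 / μ) -
        (-Complex.exp (-μ * 0) * ABpoly lam (m+1) 0 / μ) := by
      exact intervalIntegral.integral_eq_sub_of_hasDerivAt hderiv
        (hvcont.intervalIntegrable 0 1)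
    have hsplit : ∀ x : ℝ, Complex.exp (-μ * x) * ABpoly lam (m+1) x
        = v x + ((m : ℂ) + 1) / μ * (Complex.exp (-μ * x) * ABpoly lam m x) := by
      intro x
      rw [hv]
      field_simp
      ring
    have hIcont : Continuous fun x : ℝ => Complex.exp (-μ * x) * ABpoly lam m (x:ℂ) :=
      hcontexp.mul (ABpoly_continuous lam m)
    calc ∫ x : ℝ in (0:ℝ)..1, Complex.exp (-μ * x) * ABpoly lam (m+1) x
        = ∫ x : ℝ in (0:ℝ)..1,
            (v x + ((m : ℂ) + 1) / μ * (Complex.exp (-μ * x) * ABpoly lam m x)) := by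
          apply intervalIntegral.integral_congr
          intro x _
          exact hsplit x
      _ = (∫ x : ℝ in (0:ℝ)..1, v x)
          + ((m : ℂ) + 1) / μ * ∫ x : ℝ in (0:ℝ)..1, Complex.exp (-μ * x) * ABpoly lam m x := by
          rw [intervalIntegral.integral_add (hvcont.intervalIntegrable 0 1)
            (Continuous.intervalIntegrable (u := fun x : ℝ => ((m : ℂ) + 1) / μ * (Complex.exp (-μ * x) * ABpoly lam m x)) (continuous_const.mul hIcont) 0 1),
            intervalIntegral.integral_const_mul]
      _ = -(((m+1).factorial : ℂ)) / μ ^ (m+1) := by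
          rw [hint, ih]
          have hb := boundary lam hlam1 m
          have h0 : ABpoly lam (m+1) 0 = ABnum lam (m+1) := ABpoly_zero lam (m+1)
          rw [mul_one, mul_zero, hexp, Complex.exp_zero, h0]
          rcases Nat.eq_zero_or_pos m with hm | hm
          · subst hm
            norm_num at hb ⊢
            linear_combination (-1/μ) * hb
          · have hm' : m ≠ 0 := Nat.pos_iff_ne_zero.mp hm
            simp only [if_neg hm'] at hb ⊢
            rw [Nat.factorial_succ]
            push_cast
            linear_combination (-1/μ) * hb
      _ = if m + 1 = 0 then 0 else -(((m+1).factorial : ℂ)) / μ ^ (m+1) := by simp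

theorem apostol_bernoulli_fourier_coeff (lam : ℂ) (hlam0 : lam ≠ 0) (hlam1 : lam ≠ 1)
    (k : ℤ) (n : ℕ) (hn : 1 ≤ n) :
    2 * Real.pi * Complex.I * k - Complex.log lam ≠ 0 ∧
    ∫ x : ℝ in (0:ℝ)..1,
        Complex.exp (x * Complex.log lam) * ABpoly lam n x *
          Complex.exp (-(2 * Real.pi * Complex.I * k * x))
      = -(n.factorial : ℂ) / (2 * Real.pi * Complex.I * k - Complex.log lam) ^ n := by
  set μ : ℂ := 2 * Real.pi * Complex.I * k - Complex.log lam with hμdef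
  have hμ : μ ≠ 0 := by
    intro h
    have hlog : Complex.log lam = (k : ℂ) * (2 * Real.pi * Complex.I) := by
      rw [hμdef] at h
      linear_combination -h
    have : lam = 1 := by
      rw [← Complex.exp_log hlam0, hlog, Complex.exp_int_mul_two_pi_mul_I]
    exact hlam1 this
  have hexp : Complex.exp (-μ) = lam := by
    have h1 : -μ = Complex.log lam + ((-k : ℤ) : ℂ) * (2 * Real.pi * Complex.I) := by
      rw [hμdef]; push_cast; ring
    rw [h1, Complex.exp_add, Complex.exp_log hlam0, Complex.exp_int_mul_two_pi_mul_I, mul_one]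
  refine ⟨hμ, ?_⟩
  have hker : ∀ x : ℝ,
      Complex.exp (x * Complex.log lam) * ABpoly lam n x *
          Complex.exp (-(2 * Real.pi * Complex.I * k * x))
        = Complex.exp (-μ * x) * ABpoly lam n x := by
    intro x
    rw [mul_right_comm, ← Complex.exp_add]
    congr 2
    rw [hμdef]; ring
  rw [intervalIntegral.integral_congr (fun x _ => hker x), key lam hlam0 hlam1 μ hμ hexp n,
    if_neg (by omega : n ≠ 0)]
end

section
/- Let λ ∈ ℂ with λ ≠ 0 and λ ≠ 1, and let S = {2πik − log λ : k ∈ ℤ}. Let F ⊆ S be a finite subset such that |a| < |b| for every a ∈ F and every b ∈ S ∖ F, and set μ := min{|b| : b ∈ S ∖ F} (this minimum exists and μ > 0). Then there exists a constant C > 0 such that for all integers n ≥ 2, |𝓑_n(0;λ)/n! + ∑_{a∈F} a^{−n}| ≤ C·μ^{−n}. -/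
open Filter Set Metric Complex FormalMultilinearSeries Topology

private lemma ABexp_hasSum (lam : ℂ) (z : ℂ) :
    HasSum (fun j => (if j = 0 then lam - 1 else lam / (j.factorial : ℂ)) * z ^ j)
      (lam * Complex.exp z - 1) := by
  have h1 : HasSum (fun j : ℕ => lam * (z ^ j / (j.factorial : ℂ))) (lam * Complex.exp z) := by
    have := NormedSpace.expSeries_div_hasSum_exp z
    rw [← Complex.exp_eq_exp_ℂ] at this
    exact this.mul_left lam
  have h2 : HasSum (fun j : ℕ => if j = 0 then (1 : ℂ) else 0) 1 := by
    simpa using hasSum_ite_eq (0 : ℕ) (1 : ℂ)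
  have h3 := h1.sub h2
  have heq : (fun j => (if j = 0 then lam - 1 else lam / (j.factorial : ℂ)) * z ^ j)
      = fun j => lam * (z ^ j / (j.factorial : ℂ)) - (if j = 0 then (1 : ℂ) else 0) := by
    funext j
    rcases eq_or_ne j 0 with rfl | hj
    · simp
    · simp only [if_neg hj, sub_zero]; ring
  rw [heq]
  exact h3

private lemma ABofScalars_coeff (c : ℕ → ℂ) (n : ℕ) : (ofScalars ℂ c).coeff n = c n := by
  simp only [FormalMultilinearSeries.coeff, FormalMultilinearSeries.ofScalars,
    ContinuousMultilinearMap.smul_apply, ContinuousMultilinearMap.mkPiAlgebraFin_apply,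
    smul_eq_mul]
  rw [List.prod_eq_one (by simp), mul_one]

private lemma ABrec (lam : ℂ) (hlam1 : lam ≠ 1)
    {p : FormalMultilinearSeries ℂ ℂ ℂ}
    (hp : HasFPowerSeriesAt (fun z => z / (lam * Complex.exp z - 1)) p 0) (n : ℕ) :
    (∑ k ∈ Finset.range (n + 1),
        p.coeff k * (if n - k = 0 then lam - 1 else lam / ((n - k).factorial : ℂ)))
      = if n = 1 then 1 else 0 := by
  set e : ℕ → ℂ := fun j => if j = 0 then lam - 1 else lam / (j.factorial : ℂ) with he
  set d : ℕ → ℂ := fun n => ∑ k ∈ Finset.range (n + 1), p.coeff k * e (n - k) with hd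
  have hsum_c : ∀ᶠ z in 𝓝 (0 : ℂ), HasSum (fun k => p.coeff k * z ^ k)
      (z / (lam * Complex.exp z - 1)) := by
    filter_upwards [hasFPowerSeriesAt_iff.mp hp] with z hz
    simpa [smul_eq_mul, mul_comm] using hz
  have hcont : ContinuousAt (fun z => lam * Complex.exp z - 1) 0 := by fun_prop
  have hne0 : ∀ᶠ z in 𝓝 (0 : ℂ), lam * Complex.exp z - 1 ≠ 0 := by
    apply hcont.eventually_ne
    simpa using sub_ne_zero.mpr hlam1
  have hdser : HasFPowerSeriesAt (fun z : ℂ => z) (ofScalars ℂ d) 0 := by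
    rw [hasFPowerSeriesAt_iff]
    filter_upwards [hsum_c, hne0] with z hz hzne
    have hf' : Summable fun k => ‖p.coeff k * z ^ k‖ := summable_norm_iff.mpr hz.summable
    have hg' : Summable fun j => ‖e j * z ^ j‖ :=
      summable_norm_iff.mpr (ABexp_hasSum lam z).summable
    have key := hasSum_sum_range_mul_of_summable_norm hf' hg'
    rw [hz.tsum_eq, (ABexp_hasSum lam z).tsum_eq] at key
    have hval : z / (lam * Complex.exp z - 1) * (lam * Complex.exp z - 1) = z :=
      div_mul_cancel₀ _ hzne
    rw [hval] at key
    have hterm : ∀ m : ℕ, (∑ k ∈ Finset.range (m + 1),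
        (p.coeff k * z ^ k) * (e (m - k) * z ^ (m - k))) = z ^ m • (ofScalars ℂ d).coeff m := by
      intro m
      rw [ABofScalars_coeff, hd, smul_eq_mul, Finset.mul_sum]
      refine Finset.sum_congr rfl fun k hk => ?_
      have hkm : k ≤ m := Nat.lt_succ_iff.mp (Finset.mem_range.mp hk)
      have : z ^ k * z ^ (m - k) = z ^ m := by
        rw [← pow_add]; congr 1; omega
      calc (p.coeff k * z ^ k) * (e (m - k) * z ^ (m - k))
          = (p.coeff k * e (m - k)) * (z ^ k * z ^ (m - k)) := by ring
        _ = z ^ m * (p.coeff k * e (m - k)) := by rw [this]; ring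
    simpa [hterm, zero_add] using key
  have hδser : HasFPowerSeriesAt (fun z : ℂ => z)
      (ofScalars ℂ (fun m => if m = 1 then (1:ℂ) else 0)) 0 := by
    rw [hasFPowerSeriesAt_iff]
    filter_upwards with z
    have : (fun m : ℕ => z ^ m • (ofScalars ℂ (fun m => if m = 1 then (1:ℂ) else 0)).coeff m)
        = fun m => if m = 1 then z else 0 := by
      funext m
      rw [ABofScalars_coeff]
      rcases eq_or_ne m 1 with rfl | hm
      · simp
      · simp [hm]
    rw [this, zero_add]
    exact hasSum_ite_eq 1 z
  have := hdser.eq_formalMultilinearSeries hδser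
  have hdeq : d = fun m => if m = 1 then 1 else 0 :=
    (FormalMultilinearSeries.ofScalars_series_eq_iff ℂ _ _).mp this
  exact congrFun hdeq n

private lemma ABnum_eq (lam : ℂ) (hlam1 : lam ≠ 1) {p : FormalMultilinearSeries ℂ ℂ ℂ}
    (hp : HasFPowerSeriesAt (fun z => z / (lam * Complex.exp z - 1)) p 0) :
    ∀ n, ABnum lam n = (n.factorial : ℂ) * p.coeff n := by
  intro n
  induction n using Nat.strong_induction_on with
  | _ n ih =>
    match n with
    | 0 =>
      have h0 := ABrec lam hlam1 hp 0
      simp only [zero_add, Finset.sum_range_one, Nat.sub_zero, if_pos rfl] at h0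
      have hne : lam - 1 ≠ 0 := sub_ne_zero.mpr hlam1
      have hc : p.coeff 0 = 0 := by
        have hd : p.coeff 0 = 0 ∨ lam - 1 = 0 := by simpa using h0
        rcases hd with h | h
        · exact h
        · exact absurd h hne
      simp [ABnum, hc]
    | (m+1) =>
      have hrec := ABrec lam hlam1 hp (m+1)
      rw [Finset.sum_range_succ] at hrec
      simp only [Nat.sub_self, reduceIte] at hrec
      have hterm : ∀ k ∈ Finset.range (m+1),
          p.coeff k * (if m + 1 - k = 0 then lam - 1 else lam / ((m+1-k).factorial : ℂ))
            = p.coeff k * (lam / ((m+1-k).factorial : ℂ)) := by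
        intro k hk
        have hk' : m + 1 - k ≠ 0 := by have := Finset.mem_range.mp hk; omega
        rw [if_neg hk']
      rw [Finset.sum_congr rfl hterm] at hrec
      have hAB : ABnum lam (m+1) = ((if m = 0 then 1 else 0) -
          lam * ∑ k ∈ Finset.range (m+1), (((m+1).choose k : ℕ) : ℂ) * ABnum lam k) / (lam - 1) := by
        rw [ABnum, Finset.sum_attach (Finset.range (m+1))
          (fun k => (((m + 1).choose k : ℕ) : ℂ) * ABnum lam k)]
      have hABsub : ∑ k ∈ Finset.range (m+1), (((m+1).choose k : ℕ) : ℂ) * ABnum lam k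
          = ∑ k ∈ Finset.range (m+1),
              (((m+1).choose k : ℕ) : ℂ) * ((k.factorial : ℂ) * p.coeff k) :=
        Finset.sum_congr rfl fun k hk => by
          rw [ih k (by have := Finset.mem_range.mp hk; omega)]
      have h2 : ((m+1).factorial : ℂ) * ∑ k ∈ Finset.range (m+1),
            p.coeff k * (lam / ((m+1-k).factorial : ℂ))
          = lam * ∑ k ∈ Finset.range (m+1),
              (((m+1).choose k : ℕ) : ℂ) * ((k.factorial : ℂ) * p.coeff k) := by
        rw [Finset.mul_sum, Finset.mul_sum]
        refine Finset.sum_congr rfl fun k hk => ?_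
        have hkle : k ≤ m + 1 := le_of_lt (Finset.mem_range.mp hk)
        have hfact := Nat.choose_mul_factorial_mul_factorial hkle
        have hcast : ((m+1).factorial : ℂ)
            = (((m+1).choose k : ℕ) : ℂ) * (k.factorial : ℂ) * ((m+1-k).factorial : ℂ) := by
          exact_mod_cast congrArg (Nat.cast (R := ℂ)) hfact.symm
        have hfne : ((m+1-k).factorial : ℂ) ≠ 0 := Nat.cast_ne_zero.mpr (Nat.factorial_ne_zero _)
        rw [hcast]
        field_simp
      have hδ : ((m+1).factorial : ℂ) * (if m + 1 = 1 then (1:ℂ) else 0)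
          = (if m = 0 then (1:ℂ) else 0) := by
        rcases eq_or_ne m 0 with rfl | hm
        · simp [Nat.factorial]
        · have : m + 1 ≠ 1 := by omega
          simp [hm, this]
      rw [hAB, hABsub, div_eq_iff (sub_ne_zero.mpr hlam1)]
      linear_combination h2 - ((m+1).factorial : ℂ) * hrec - hδ


private lemma ABdslope_differentiable {g : ℂ → ℂ} (hg : Differentiable ℂ g) (a : ℂ) :
    Differentiable ℂ (dslope g a) := by
  intro z
  rcases eq_or_ne z a with rfl | hz
  · obtain ⟨p, hp⟩ := hg.analyticAt z
    exact hp.has_fpower_series_dslope_fslope.differentiableAt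
  · have h1 : DifferentiableAt ℂ (fun w => (g w - g a) / (w - a)) z :=
      ((hg z).sub_const (g a)).div ((differentiableAt_id.sub_const a)) (sub_ne_zero.mpr hz)
    refine h1.congr_of_eventuallyEq ?_
    filter_upwards [isOpen_ne.mem_nhds hz] with w hw
    rw [dslope_of_ne _ hw, slope_def_field]

private lemma ABfoldl_dslope : ∀ (L : List ℂ), L.Nodup → ∀ g : ℂ → ℂ, Differentiable ℂ g →
    (∀ a ∈ L, g a = 0) →
    Differentiable ℂ (L.foldl dslope g) ∧
      ∀ z ∉ L, (L.foldl dslope g) z * (L.map (fun a => z - a)).prod = g z := by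
  intro L
  induction L with
  | nil => intro _ g hg _; simpa using hg
  | cons a L ih =>
    intro hnd g hg hv
    have hga : g a = 0 := hv a (List.mem_cons_self)
    have h1 : Differentiable ℂ (dslope g a) := ABdslope_differentiable hg a
    have h2 : ∀ b ∈ L, dslope g a b = 0 := by
      intro b hb
      have hba : b ≠ a := by rintro rfl; exact (List.nodup_cons.mp hnd).1 hb
      rw [dslope_of_ne _ hba, slope_def_field, hv b (List.mem_cons_of_mem _ hb), hga]
      simp
    obtain ⟨hd, hf⟩ := ih (List.nodup_cons.mp hnd).2 _ h1 h2
    refine ⟨by simpa using hd, ?_⟩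
    intro z hz
    have hz1 : z ≠ a := fun h => hz (h ▸ List.mem_cons_self)
    have hz2 : z ∉ L := fun h => hz (List.mem_cons_of_mem _ h)
    have key := hf z hz2
    simp only [List.foldl_cons, List.map_cons, List.prod_cons]
    have hds : dslope g a z = g z / (z - a) := by
      rw [dslope_of_ne _ hz1, slope_def_field, hga, sub_zero]
    rw [show z - a = (z : ℂ) - a from rfl] at *
    calc (L.foldl dslope (dslope g a)) z * ((z - a) * (L.map (fun b => z - b)).prod)
        = ((L.foldl dslope (dslope g a)) z * (L.map (fun b => z - b)).prod) * (z - a) := by ring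
      _ = dslope g a z * (z - a) := by rw [key]
      _ = g z := by rw [hds, div_mul_cancel₀ _ (sub_ne_zero.mpr hz1)]


private lemma ABprod_cont (M : List ℂ) : Continuous fun w : ℂ => (M.map (fun a => w - a)).prod := by
  induction M with
  | nil => simpa using continuous_const
  | cons a M ih =>
    simp only [List.map_cons, List.prod_cons]
    exact (continuous_id.sub continuous_const).mul ih


set_option maxHeartbeats 2000000 in
theorem apostol_bernoulli_numbers_asymptotic (lam : ℂ) (hlam0 : lam ≠ 0) (hlam1 : lam ≠ 1)
    (S : Set ℂ) (hS : S = {a : ℂ | ∃ k : ℤ, a = 2 * Real.pi * Complex.I * k - Complex.log lam})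
    (F : Finset ℂ) (hFS : ↑F ⊆ S)
    (hlt : ∀ a ∈ F, ∀ b ∈ S \ ↑F, ‖a‖ < ‖b‖)
    (μ : ℝ) (hμ : IsLeast ((fun z : ℂ => ‖z‖) '' (S \ ↑F)) μ) :
    0 < μ ∧ ∃ C > 0, ∀ n : ℕ, 2 ≤ n →
      ‖ABpoly lam n 0 / (n.factorial : ℂ) + ∑ a ∈ F, (a ^ n)⁻¹‖ ≤ C / μ ^ n := by
  obtain ⟨⟨b₀, hb₀mem, hb₀abs⟩, hlbw⟩ := hμ
  have hlb : ∀ b, b ∈ S → b ∉ F → μ ≤ ‖b‖ := fun b h1 h2 => hlbw ⟨b, ⟨h1, h2⟩, rfl⟩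
  have hψ : ∀ a : ℂ, a ∈ S ↔ ∃ k : ℤ, a = 2 * Real.pi * Complex.I * k - Complex.log lam := by
    intro a; rw [hS]; exact Iff.rfl
  have hpi := Real.pi_pos
  have h0S : (0 : ℂ) ∉ S := by
    rw [hS]
    rintro ⟨k, hk⟩
    have hlog : Complex.log lam = ((2 * Real.pi * k : ℝ) : ℂ) * Complex.I := by
      push_cast
      linear_combination hk
    have him : (Complex.log lam).im = 2 * Real.pi * k := by
      rw [hlog]; simp
    have h1 : (Complex.log lam).im ≤ Real.pi := (Complex.log_im lam) ▸ Complex.arg_le_pi lam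
    have h2 : -Real.pi < (Complex.log lam).im := (Complex.log_im lam) ▸ Complex.neg_pi_lt_arg lam
    have hk0 : k = 0 := by
      rcases lt_trichotomy k 0 with h | h | h
      · have hk1 : k ≤ -1 := by omega
        have : (k : ℝ) ≤ -1 := by exact_mod_cast hk1
        nlinarith
      · exact h
      · have : (1 : ℝ) ≤ (k : ℝ) := by exact_mod_cast h
        nlinarith
    rw [hk0] at hlog
    simp at hlog
    have : lam = 1 := by
      rw [← Complex.exp_log hlam0, hlog, Complex.exp_zero]
    exact hlam1 this
  have hzero : ∀ z : ℂ, lam * Complex.exp z - 1 = 0 ↔ z ∈ S := by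
    intro z
    rw [sub_eq_zero, hψ]
    constructor
    · intro h
      have : Complex.exp (Complex.log lam + z) = 1 := by
        rw [Complex.exp_add, Complex.exp_log hlam0]; exact h
      obtain ⟨n, hn⟩ := Complex.exp_eq_one_iff.mp this
      exact ⟨n, by push_cast at hn ⊢; linear_combination hn⟩
    · rintro ⟨k, rfl⟩
      have : Complex.exp (Complex.log lam + (2 * Real.pi * Complex.I * k - Complex.log lam)) = 1 := by
        apply Complex.exp_eq_one_iff.mpr
        exact ⟨k, by push_cast; ring⟩
      rw [Complex.exp_add, Complex.exp_log hlam0] at this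
      exact this
  have hfinR : ∀ R : ℝ, {a | a ∈ S ∧ ‖a‖ ≤ R}.Finite := by
    intro R
    set K : ℤ := ⌈(R + ‖Complex.log lam‖) / (2 * Real.pi)⌉ with hK
    apply Set.Finite.subset ((Set.finite_Icc (-K) K).image
      (fun k : ℤ => 2 * Real.pi * Complex.I * k - Complex.log lam))
    rintro a ⟨haS, haR⟩
    obtain ⟨k, hak⟩ := (hψ a).mp haS
    refine ⟨k, ?_, hak.symm⟩
    have hnorm : ‖2 * Real.pi * Complex.I * (k : ℂ)‖ = 2 * Real.pi * |(k : ℝ)| := by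
      simp [abs_of_pos hpi]
    have h1 : ‖2 * Real.pi * Complex.I * (k : ℂ)‖ - ‖Complex.log lam‖
        ≤ ‖a‖ := by
      rw [hak]
      simpa using
        norm_sub_norm_le (2 * (Real.pi : ℂ) * Complex.I * (k : ℂ)) (Complex.log lam)

    have h2 : 2 * Real.pi * |(k : ℝ)| ≤ R + ‖Complex.log lam‖ := by
      rw [← hnorm]; linarith
    have h3 : |(k : ℝ)| ≤ (R + ‖Complex.log lam‖) / (2 * Real.pi) := by
      rw [le_div_iff₀ (by linarith)]; linarith
    have h4 : |(k : ℝ)| ≤ (K : ℝ) := h3.trans (Int.le_ceil _)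
    have h5 := abs_le.mp h4
    exact Set.mem_Icc.mpr ⟨by exact_mod_cast h5.1, by exact_mod_cast h5.2⟩
  -- basic mu facts
  have hb₀S : b₀ ∈ S := hb₀mem.1
  have hb₀F : b₀ ∉ F := hb₀mem.2
  have hμpos : 0 < μ := by
    rw [← hb₀abs]
    exact norm_pos_iff.mpr (fun h => h0S (h ▸ hb₀S))
  have hFμ : ∀ a ∈ F, ‖a‖ < μ := fun a ha => hb₀abs ▸ hlt a ha b₀ hb₀mem
  set G₀ : Set ℂ := {b : ℂ | b ∈ S ∧ b ∉ F ∧ ‖b‖ = μ} with hG₀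
  have hG₀fin : G₀.Finite := (hfinR μ).subset (fun b hb => ⟨hb.1, le_of_eq hb.2.2⟩)
  set T : Finset ℂ := F ∪ hG₀fin.toFinset with hT
  have hTiff : ∀ a : ℂ, a ∈ T ↔ a ∈ F ∨ a ∈ G₀ := by
    intro a; simp [hT, Set.Finite.mem_toFinset]
  have hTS : ∀ a ∈ T, a ∈ S := by
    intro a ha; rcases (hTiff a).mp ha with h | h
    · exact hFS h
    · exact h.1
  have hT0 : ∀ a ∈ T, a ≠ 0 := fun a ha h => h0S (h ▸ hTS a ha)
  have hTabs : ∀ a ∈ T, ‖a‖ ≤ μ := by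
    intro a ha; rcases (hTiff a).mp ha with h | h
    · exact (hFμ a h).le
    · exact le_of_eq h.2.2
  obtain ⟨b₁, hb₁S, hb₁T⟩ : ∃ b, b ∈ S ∧ b ∉ T := by
    have hSinf : S.Infinite := by
      have hrange : S = Set.range
          (fun k : ℤ => 2 * Real.pi * Complex.I * k - Complex.log lam) := by
        rw [hS]; ext a; simp [Set.mem_setOf_eq, Set.mem_range, eq_comm]
      rw [hrange]
      apply Set.infinite_range_of_injective
      intro k₁ k₂ h
      have h2πI : (2 * (Real.pi : ℂ) * Complex.I) ≠ 0 := by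
        simp [Real.pi_ne_zero, Complex.I_ne_zero]
      have h' : 2 * (Real.pi : ℂ) * Complex.I * k₁ = 2 * (Real.pi : ℂ) * Complex.I * k₂ := by
        linear_combination h
      exact_mod_cast mul_left_cancel₀ h2πI h'
    obtain ⟨b, hb⟩ := (hSinf.diff T.finite_toSet).nonempty
    exact ⟨b, hb.1, hb.2⟩
  set V : Set ℂ := {b : ℂ | (b ∈ S ∧ b ∉ T) ∧ ‖b‖ ≤ ‖b₁‖} with hV
  have hVfin : V.Finite := (hfinR (‖b₁‖)).subset (fun b hb => ⟨hb.1.1, hb.2⟩)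
  have hVne : V.Nonempty := ⟨b₁, ⟨hb₁S, hb₁T⟩, le_refl _⟩
  obtain ⟨b₂, hb₂V, hb₂min⟩ := Set.exists_min_image V (fun z : ℂ => ‖z‖) hVfin hVne
  set ν : ℝ := ‖b₂‖ with hνdef
  have hν : ∀ b, b ∈ S → b ∉ T → ν ≤ ‖b‖ := by
    intro b hbS hbT
    by_cases hb : ‖b‖ ≤ ‖b₁‖
    · exact hb₂min b ⟨⟨hbS, hbT⟩, hb⟩
    · exact le_trans (hb₂min b₁ ⟨⟨hb₁S, hb₁T⟩, le_refl _⟩) (le_of_not_ge hb)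
  have hb₂F : b₂ ∉ F := fun h => hb₂V.1.2 ((hTiff b₂).mpr (Or.inl h))
  have hμν : μ < ν := by
    have h1 : μ ≤ ν := hlb b₂ hb₂V.1.1 hb₂F
    rcases eq_or_lt_of_le h1 with h | h
    · exact absurd ((hTiff b₂).mpr (Or.inr ⟨hb₂V.1.1, hb₂F, h.symm⟩)) hb₂V.1.2
    · exact h
  set r : ℝ := (μ + ν) / 2 with hrdef
  set r' : ℝ := (μ + r) / 2 with hr'def
  have hμr' : μ < r' := by rw [hr'def, hrdef]; linarith
  have hr'r : r' < r := by rw [hr'def]; linarith [hμr'.trans_le (le_refl r'), hμν]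
  have hrν : r < ν := by rw [hrdef]; linarith
  have hrpos : 0 < r := lt_trans (hμpos.trans hμr') hr'r
  -- Part 3 : the entire functions
  set φ : ℂ → ℂ := fun z => lam * Complex.exp z - 1 with hφ
  have hφdiff : Differentiable ℂ φ := by
    rw [hφ]; exact (Complex.differentiable_exp.const_mul lam).sub_const 1
  have hφT : ∀ a ∈ T, φ a = 0 := fun a ha => (hzero a).mpr (hTS a ha)
  have hφderiv : ∀ a : ℂ, HasDerivAt φ (lam * Complex.exp a) a := by
    intro a
    exact ((Complex.hasDerivAt_exp a).const_mul lam).sub_const 1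
  have hφd1 : ∀ a ∈ T, lam * Complex.exp a = 1 := by
    intro a ha
    have h := hφT a ha
    rw [hφ] at h
    linear_combination h
  set L : List ℂ := T.toList with hLdef
  have hLnd : L.Nodup := Finset.nodup_toList T
  have hLmem : ∀ a : ℂ, a ∈ L ↔ a ∈ T := fun a => Finset.mem_toList
  set N : ℂ → ℂ := fun z => z - ∑ a ∈ T, a * dslope φ a z with hN
  have hNdiff : Differentiable ℂ N := by
    rw [hN]
    apply differentiable_id.sub
    intro z
    apply DifferentiableAt.fun_sum
    intro a _
    exact ((ABdslope_differentiable hφdiff a) z).const_mul a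
  have hNT : ∀ a ∈ T, N a = 0 := by
    intro a ha
    rw [hN]
    have hsum : ∑ b ∈ T, b * dslope φ b a = a := by
      rw [Finset.sum_eq_single_of_mem a ha]
      · rw [dslope_same, (hφderiv a).deriv, hφd1 a ha, mul_one]
      · intro b hb hba
        rw [dslope_of_ne _ hba.symm, slope_def_field, hφT a ha, hφT b hb]
        simp
    simp [hsum]
  obtain ⟨hΦdiff, hΦeq⟩ :=
    ABfoldl_dslope L hLnd φ hφdiff (fun a ha => hφT a ((hLmem a).mp ha))
  obtain ⟨hNNdiff, hNNeq⟩ :=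
    ABfoldl_dslope L hLnd N hNdiff (fun a ha => hNT a ((hLmem a).mp ha))
  set Φ : ℂ → ℂ := L.foldl dslope φ with hΦdef
  set NN : ℂ → ℂ := L.foldl dslope N with hNNdef
  have hPne : ∀ z : ℂ, z ∉ T → (L.map (fun a => z - a)).prod ≠ 0 := by
    intro z hz
    apply List.prod_ne_zero
    intro h0
    obtain ⟨a, haL, ha0⟩ := List.mem_map.mp h0
    have hza : z = a := by rwa [sub_eq_zero] at ha0
    exact hz (hza ▸ (hLmem a).mp haL)
  have hφne : ∀ z : ℂ, ‖z‖ ≤ r → z ∉ T → φ z ≠ 0 := by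
    intro z hzr hzT h0
    have hzS : z ∈ S := (hzero z).mp h0
    exact absurd ((hν z hzS hzT).trans hzr) (not_le.mpr hrν)
  have hΦne_off : ∀ z : ℂ, z ∉ T → φ z ≠ 0 → Φ z ≠ 0 := by
    intro z hzT hφz h0
    have h1 := hΦeq z (fun h => hzT ((hLmem z).mp h))
    rw [h0, zero_mul] at h1
    exact hφz h1.symm
  have hΦne : ∀ z : ℂ, ‖z‖ ≤ r → Φ z ≠ 0 := by
    intro z hzr
    by_cases hzT : z ∈ T
    · set P : ℂ → ℂ := fun w => ((L.erase z).map (fun a => w - a)).prod with hPdef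
      have hPz : P z ≠ 0 := by
        apply List.prod_ne_zero
        intro h0
        obtain ⟨a, haL, ha0⟩ := List.mem_map.mp h0
        have haz : z ≠ a := by
          intro h
          exact (List.Nodup.not_mem_erase hLnd) (h ▸ haL)
        exact haz (by rwa [sub_eq_zero] at ha0)
      have hzL : z ∈ L := (hLmem z).mpr hzT
      have hperm : L.Perm (z :: L.erase z) := List.perm_cons_erase hzL
      have hprodsplit : ∀ w : ℂ, (L.map (fun a => w - a)).prod = (w - z) * P w := by
        intro w
        have := (hperm.map (fun a => w - a)).prod_eq
        simpa [hPdef] using this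
      have hev : ∀ᶠ w in 𝓝[≠] z, Φ w = slope φ z w / P w := by
        have hopen : IsOpen {w : ℂ | w ∉ (T.erase z : Finset ℂ)} :=
          (T.erase z).finite_toSet.isClosed.isOpen_compl
        have hmem : z ∈ {w : ℂ | w ∉ (T.erase z : Finset ℂ)} := by simp
        filter_upwards [nhdsWithin_le_nhds (hopen.mem_nhds hmem), self_mem_nhdsWithin]
          with w hw1 hw2
        have hwz : w ≠ z := hw2
        have hwT : w ∉ T := fun h => hw1 (Finset.mem_erase.mpr ⟨hwz, h⟩)
        have h1 := hΦeq w (fun h => hwT ((hLmem w).mp h))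
        rw [hprodsplit w] at h1
        have hwz' : w - z ≠ 0 := sub_ne_zero.mpr hwz
        have hPw : P w ≠ 0 := by
          apply List.prod_ne_zero
          intro h0
          obtain ⟨a, haL, ha0⟩ := List.mem_map.mp h0
          have haT : a ∈ T := (hLmem a).mp (List.mem_of_mem_erase haL)
          exact hwT (by rw [sub_eq_zero] at ha0; exact ha0 ▸ haT)
        have hsl : slope φ z w = φ w / (w - z) := by
          rw [slope_def_field, hφT z hzT, sub_zero]
        rw [hsl, div_div, eq_div_iff (mul_ne_zero hwz' hPw)]
        linear_combination h1
      have hlim1 : Filter.Tendsto (slope φ z) (𝓝[≠] z) (𝓝 1) := by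
        have h := hasDerivAt_iff_tendsto_slope.mp (hφderiv z)
        rwa [hφd1 z hzT] at h
      have hlim2 : Filter.Tendsto P (𝓝[≠] z) (𝓝 (P z)) :=
        ((ABprod_cont (L.erase z)).tendsto z).mono_left nhdsWithin_le_nhds
      have hlim : Filter.Tendsto (fun w => slope φ z w / P w) (𝓝[≠] z) (𝓝 (1 / P z)) :=
        hlim1.div hlim2 hPz
      have hΦlim : Filter.Tendsto Φ (𝓝[≠] z) (𝓝 (Φ z)) :=
        ((hΦdiff z).continuousAt.tendsto).mono_left nhdsWithin_le_nhds
      have hΦval : Φ z = 1 / P z := tendsto_nhds_unique (hΦlim.congr' hev) hlim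
      rw [hΦval]
      exact one_div_ne_zero hPz
    · exact hΦne_off z hzT (hφne z hzr hzT)
  -- Part 4 : power series of the regular part
  set R : NNReal := ⟨r, hrpos.le⟩ with hRdef
  have hhdiff : DifferentiableOn ℂ (fun z => NN z / Φ z) (Metric.closedBall 0 (R : ℝ)) := by
    intro z hz
    have hzr : ‖z‖ ≤ r := by
      have h := Metric.mem_closedBall.mp hz
      rwa [dist_zero_right] at h
    exact ((hNNdiff z).div (hΦdiff z) (hΦne z hzr)).differentiableWithinAt
  have hRpos : 0 < R := by
    rw [← NNReal.coe_pos]; exact hrpos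
  have hq0 : HasFPowerSeriesOnBall (fun z => NN z / Φ z)
      (cauchyPowerSeries (fun z => NN z / Φ z) 0 R) 0 R :=
    hhdiff.hasFPowerSeriesOnBall hRpos
  set q : FormalMultilinearSeries ℂ ℂ ℂ :=
    cauchyPowerSeries (fun z => NN z / Φ z) 0 R with hqdef
  have hr'pos : (0:ℝ) < r' := hμpos.trans hμr'
  have hr'NN : ((Real.toNNReal r') : ENNReal) < q.radius := by
    refine lt_of_lt_of_le ?_ hq0.r_le
    rw [ENNReal.coe_lt_coe, ← NNReal.coe_lt_coe, Real.coe_toNNReal _ hr'pos.le]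
    exact hr'r
  obtain ⟨C₀, hC₀pos, hC₀⟩ := q.norm_mul_pow_le_of_lt_radius hr'NN
  -- power series of f at 0
  have hφ0 : lam * Complex.exp 0 - 1 ≠ 0 := by simpa using sub_ne_zero.mpr hlam1
  have hfan : AnalyticAt ℂ (fun z => z / (lam * Complex.exp z - 1)) 0 := by
    have h1 : AnalyticAt ℂ (fun z => lam * Complex.exp z - 1) 0 := hφdiff.analyticAt 0
    exact (analyticAt_id.div h1 hφ0)
  obtain ⟨p, hp⟩ := id hfan
  have hAB := ABnum_eq lam hlam1 hp
  -- eventual identity of power series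
  have h0T : (0:ℂ) ∉ T := fun h => h0S (hTS 0 h)
  have hevT : ∀ᶠ z in 𝓝 (0:ℂ), z ∉ T := by
    have hop : IsOpen ((T : Set ℂ)ᶜ) := T.finite_toSet.isClosed.isOpen_compl
    exact hop.mem_nhds (by simpa using h0T)
  have hevφ : ∀ᶠ z in 𝓝 (0:ℂ), φ z ≠ 0 :=
    (hφdiff.continuous.continuousAt).eventually_ne (by rw [hφ]; exact hφ0)
  have hgeo : ∀ᶠ z in 𝓝 (0:ℂ), ∀ a ∈ T, ‖z * a⁻¹‖ < 1 := by
    rw [eventually_all_finset]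
    intro a _
    have hten : Filter.Tendsto (fun z : ℂ => ‖z * a⁻¹‖) (𝓝 0) (𝓝 ‖(0:ℂ) * a⁻¹‖) :=
      ((continuous_id.mul continuous_const).norm).tendsto 0
    rw [zero_mul, norm_zero] at hten
    exact hten.eventually_lt_const one_pos
  have hsum_ev : ∀ᶠ z in 𝓝 (0:ℂ), HasSum
      (fun n => z ^ n • (q.coeff n + ∑ a ∈ T, -(a⁻¹ ^ n)))
      (z / (lam * Complex.exp z - 1)) := by
    filter_upwards [hevT, hevφ, hgeo, hasFPowerSeriesAt_iff.mp hq0.hasFPowerSeriesAt]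
      with z hzT hzφ hzgeo hzq
    have hq' : HasSum (fun n => z ^ n • q.coeff n) (NN z / Φ z) := by simpa using hzq
    have hgeom : ∀ a ∈ T, HasSum (fun n => z ^ n • (-(a⁻¹ ^ n))) (a * (z - a)⁻¹) := by
      intro a ha
      have hza : z ≠ a := fun h => hzT (h ▸ ha)
      have ha0 : a ≠ 0 := hT0 a ha
      have h1 := hasSum_geometric_of_norm_lt_one (ξ := z * a⁻¹) (hzgeo a ha)
      have h2 := h1.neg
      have hval : -((1 - z * a⁻¹)⁻¹) = a * (z - a)⁻¹ := by
        rw [show (1 : ℂ) - z * a⁻¹ = (a - z) * a⁻¹ by field_simp]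
        rw [mul_inv, inv_inv]
        rw [show z - a = -(a - z) by ring, inv_neg]
        ring
      have h3 : (fun n : ℕ => z ^ n • (-(a⁻¹ ^ n))) = fun n => -((z * a⁻¹) ^ n) := by
        funext n; rw [smul_eq_mul, mul_pow]; ring
      rw [h3, ← hval]
      exact h2
    have hSsum : HasSum (fun n => ∑ a ∈ T, z ^ n • (-(a⁻¹ ^ n)))
        (∑ a ∈ T, a * (z - a)⁻¹) := hasSum_sum hgeom
    have htot := hq'.add hSsum
    have hzL : z ∉ L := fun h => hzT ((hLmem z).mp h)
    have h1 := hΦeq z hzL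
    have h2 := hNNeq z hzL
    have hΦz : Φ z ≠ 0 := hΦne_off z hzT hzφ
    have hquot : NN z / Φ z = N z / φ z := by
      rw [div_eq_div_iff hΦz hzφ]
      linear_combination (-(NN z)) * h1 + Φ z * h2
    have hNz : N z = z - φ z * ∑ a ∈ T, a * (z - a)⁻¹ := by
      simp only [hN]
      rw [Finset.mul_sum]
      congr 1
      refine Finset.sum_congr rfl fun a ha => ?_
      have hza : z ≠ a := fun h => hzT (h ▸ ha)
      rw [dslope_of_ne _ hza, slope_def_field, hφT a ha, sub_zero, div_eq_mul_inv]
      ring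
    have hfz : NN z / Φ z + ∑ a ∈ T, a * (z - a)⁻¹ = z / (lam * Complex.exp z - 1) := by
      rw [hquot, hNz]
      rw [show z / (lam * Complex.exp z - 1) = z / φ z from rfl]
      field_simp
      ring
    rw [hfz] at htot
    have hterm : (fun n => z ^ n • (q.coeff n + ∑ a ∈ T, -(a⁻¹ ^ n)))
        = fun n => z ^ n • q.coeff n + ∑ a ∈ T, z ^ n • (-(a⁻¹ ^ n)) := by
      funext n; rw [smul_add, Finset.smul_sum]
    rw [hterm]
    exact htot
  have hpE : HasFPowerSeriesAt (fun z => z / (lam * Complex.exp z - 1))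
      (FormalMultilinearSeries.ofScalars ℂ (fun n => q.coeff n + ∑ a ∈ T, -(a⁻¹ ^ n))) 0 := by
    rw [hasFPowerSeriesAt_iff]
    filter_upwards [hsum_ev] with z hz
    simpa [ABofScalars_coeff] using hz
  have hcoeff : ∀ n, p.coeff n = q.coeff n + ∑ a ∈ T, -(a⁻¹ ^ n) := by
    intro n
    have hpeq := hp.eq_formalMultilinearSeries hpE
    have h := congrArg (fun s : FormalMultilinearSeries ℂ ℂ ℂ => s.coeff n) hpeq
    simpa [ABofScalars_coeff] using h
  -- Part 5 : the estimate
  have hCpos : (0:ℝ) < C₀ + T.card + 1 := by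
    have h1 : (0:ℝ) ≤ (T.card : ℝ) := Nat.cast_nonneg _
    linarith
  refine ⟨hμpos, C₀ + T.card + 1, hCpos, ?_⟩
  intro n hn
  have hABpoly : ABpoly lam n 0 = ABnum lam n := by
    rw [ABpoly, Finset.sum_eq_single_of_mem n (Finset.self_mem_range_succ n)]
    · simp
    · intro k hk hkn
      have hnk : n - k ≠ 0 := by have := Finset.mem_range.mp hk; omega
      simp [zero_pow hnk]
  have hfac0 : (n.factorial : ℂ) ≠ 0 := Nat.cast_ne_zero.mpr (Nat.factorial_ne_zero n)
  have hcn : ABpoly lam n 0 / (n.factorial : ℂ) = p.coeff n := by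
    rw [hABpoly, hAB n, mul_comm, mul_div_assoc, div_self hfac0, mul_one]
  have hdisj : Disjoint F hG₀fin.toFinset := by
    rw [Finset.disjoint_left]
    intro a haF haG
    exact ((hG₀fin.mem_toFinset.mp haG).2.1) haF
  have hFneg : ∑ a ∈ F, -(a⁻¹ ^ n) = -(∑ a ∈ F, (a ^ n)⁻¹) := by
    calc ∑ a ∈ F, -(a⁻¹ ^ n) = ∑ a ∈ F, -((a ^ n)⁻¹) :=
          Finset.sum_congr rfl fun a _ => by rw [inv_pow]
      _ = -(∑ a ∈ F, (a ^ n)⁻¹) := by rw [Finset.sum_neg_distrib]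
  have hTsum : ∑ a ∈ T, -(a⁻¹ ^ n)
      = -(∑ a ∈ F, (a ^ n)⁻¹) + ∑ a ∈ hG₀fin.toFinset, -(a⁻¹ ^ n) := by
    rw [hT, Finset.sum_union hdisj, hFneg]
  have hexpr : ABpoly lam n 0 / (n.factorial : ℂ) + ∑ a ∈ F, (a ^ n)⁻¹
      = q.coeff n + ∑ a ∈ hG₀fin.toFinset, -(a⁻¹ ^ n) := by
    rw [hcn, hcoeff n, hTsum]; ring
  rw [hexpr]
  have hμpow : (0:ℝ) < μ ^ n := pow_pos hμpos n
  have hb1 : ‖q.coeff n‖ ≤ C₀ / μ ^ n := by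
    have h1 := hC₀ n
    rw [FormalMultilinearSeries.norm_apply_eq_norm_coef,
      Real.coe_toNNReal _ hr'pos.le] at h1
    have h2 : ‖q.coeff n‖ ≤ C₀ / r' ^ n := by
      rw [le_div_iff₀ (pow_pos hr'pos n)]
      exact h1
    refine h2.trans ?_
    gcongr
  have hb2 : ‖∑ a ∈ hG₀fin.toFinset, -(a⁻¹ ^ n)‖ ≤ T.card / μ ^ n := by
    calc ‖∑ a ∈ hG₀fin.toFinset, -(a⁻¹ ^ n)‖
        ≤ ∑ a ∈ hG₀fin.toFinset, ‖-(a⁻¹ ^ n)‖ := by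
          simpa using
            norm_sum_le hG₀fin.toFinset (fun a => -(a⁻¹ ^ n))
      _ = ∑ a ∈ hG₀fin.toFinset, (1 / μ) ^ n := by
          refine Finset.sum_congr rfl fun a ha => ?_
          have haμ : ‖a‖ = μ := (hG₀fin.mem_toFinset.mp ha).2.2
          rw [norm_neg, norm_pow, norm_inv, haμ, one_div]
      _ = (hG₀fin.toFinset.card : ℝ) * (1 / μ) ^ n := by
          rw [Finset.sum_const, nsmul_eq_mul]
      _ ≤ (T.card : ℝ) * (1 / μ) ^ n := by
          have hsub : hG₀fin.toFinset ⊆ T := by rw [hT]; exact Finset.subset_union_right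
          gcongr
      _ = T.card / μ ^ n := by rw [div_pow, one_pow]; ring
  calc ‖q.coeff n + ∑ a ∈ hG₀fin.toFinset, -(a⁻¹ ^ n)‖
      ≤ ‖q.coeff n‖ + ‖∑ a ∈ hG₀fin.toFinset, -(a⁻¹ ^ n)‖ :=
        norm_add_le _ _
    _ ≤ C₀ / μ ^ n + T.card / μ ^ n := add_le_add hb1 hb2
    _ ≤ (C₀ + T.card + 1) / μ ^ n := by
        rw [← add_div]
        exact (div_le_div_iff_of_pos_right hμpow).mpr (by linarith)
end

section
/- Let m ≥ 1 be an integer and let K ⊆ ℂ be compact. Then there exists a constant C > 0 such that for all integers n ≥ 2 and all z ∈ K, |(2πi)^n · B_n(z)/n! + ∑_{1≤|k|≤m} e^{2πikz}/k^n| ≤ C·e^{2π(m+1)|z|}/(m+1)^n, where the sum is over integers k with 1 ≤ |k| ≤ m. -/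
open Complex Finset
open scoped Real Nat NNReal ENNReal

private lemma two_pow_le_fact (j : ℕ) : (2:ℕ)^j ≤ (j+1)! := by
  induction j with
  | zero => simp
  | succ j ih =>
    rw [pow_succ, Nat.factorial_succ]
    calc (2:ℕ)^j * 2 ≤ (j+1)! * 2 := by omega
    _ ≤ (j+2) * (j+1)! := by nlinarith [Nat.one_le_iff_ne_zero.2 (Nat.factorial_ne_zero (j+1))]

private lemma abs_bernoulli_le (n : ℕ) : |((bernoulli n : ℚ) : ℝ)| ≤ n ! := by
  induction n using Nat.strong_induction_on with
  | _ n ih =>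
    match n with
    | 0 => simp
    | 1 => rw [bernoulli_one]; push_cast; rw [abs_div, abs_neg, abs_one]; norm_num [abs_of_pos]
    | (n+2) =>
      have h := sum_bernoulli (n+3)
      rw [Finset.sum_range_succ, if_neg (by omega)] at h
      have hchoose : ((n+3).choose (n+2) : ℚ) = (n+3 : ℚ) := by
        rw [Nat.choose_succ_self_right]; push_cast; ring
      rw [hchoose] at h
      have hb : ((bernoulli (n+2) : ℚ) : ℝ) =
          -(∑ k ∈ range (n+2), ((n+3).choose k : ℝ) * (bernoulli k : ℚ)) / (n+3 : ℝ) := by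
        have h' : (bernoulli (n+2) : ℚ) =
            -(∑ k ∈ range (n+2), ((n+3).choose k : ℚ) * bernoulli k) / (n+3 : ℚ) := by
          field_simp at h ⊢
          linarith [h]
        rw [h']
        push_cast
        ring
      rw [hb, abs_div, abs_neg]
      rw [abs_of_pos (by positivity : (0:ℝ) < (n+3:ℝ))]
      rw [div_le_iff₀ (by positivity : (0:ℝ) < (n+3:ℝ))]
      calc |∑ k ∈ range (n+2), ((n+3).choose k : ℝ) * (bernoulli k : ℚ)|
          ≤ ∑ k ∈ range (n+2), |((n+3).choose k : ℝ) * (bernoulli k : ℚ)| :=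
            Finset.abs_sum_le_sum_abs _ _
        _ ≤ ∑ k ∈ range (n+2), ((n+3)! : ℝ) * (1/2)^(n+2-k) := by
            apply Finset.sum_le_sum
            intro k hk
            rw [Finset.mem_range] at hk
            rw [abs_mul, Nat.abs_cast]
            have h1 : |((bernoulli k : ℚ) : ℝ)| ≤ (k ! : ℝ) := ih k (by omega)
            have h2 : ((n+3).choose k : ℝ) * (k ! : ℝ) * (2:ℝ)^(n+2-k) ≤ ((n+3)! : ℝ) := by
              have e1 : (n+3).choose k * k ! * (n+3-k)! = (n+3)! :=
                Nat.choose_mul_factorial_mul_factorial (by omega)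
              have e2 : (2:ℕ)^(n+2-k) ≤ (n+3-k)! := by
                have := two_pow_le_fact (n+2-k)
                have e3 : n+2-k+1 = n+3-k := by omega
                rwa [e3] at this
              have := Nat.mul_le_mul_left ((n+3).choose k * k !) e2
              rw [e1] at this
              exact_mod_cast this
            calc ((n+3).choose k : ℝ) * |((bernoulli k : ℚ) : ℝ)|
                ≤ ((n+3).choose k : ℝ) * (k ! : ℝ) := by
                  apply mul_le_mul_of_nonneg_left h1 (by positivity)
              _ ≤ ((n+3)! : ℝ) * (1/2)^(n+2-k) := by
                  rw [div_pow, one_pow, mul_one_div, le_div_iff₀ (by positivity)]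
                  linarith [h2]
        _ ≤ ((n+3)! : ℝ) * 1 := by
            rw [← Finset.mul_sum]
            apply mul_le_mul_of_nonneg_left _ (by positivity)
            calc ∑ k ∈ range (n+2), ((1:ℝ)/2)^(n+2-k)
                = ∑ k ∈ range (n+2), ((1:ℝ)/2)^(k+1) := by
                  rw [← Finset.sum_range_reflect]
                  apply Finset.sum_congr rfl
                  intro i hi
                  rw [Finset.mem_range] at hi
                  congr 1
                  omega
              _ = (1/2) * ∑ k ∈ range (n+2), ((1:ℝ)/2)^k := by
                  rw [Finset.mul_sum]
                  apply Finset.sum_congr rfl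
                  intro i _
                  ring
              _ ≤ 1 := by linarith [sum_geometric_two_le (n+2)]
        _ ≤ ((n+2)! : ℝ) * ((n+3) : ℝ) := by
            rw [mul_one]
            have : ((n+3)! : ℝ) = ((n+2)! : ℝ) * (n+3 : ℝ) := by
              rw_mod_cast [Nat.factorial_succ (n+2)]; push_cast; ring
            rw [this]

noncomputable def bcoef (z : ℂ) (n : ℕ) : ℂ := Polynomial.aeval z (Polynomial.bernoulli n) / n !

noncomputable def dcoef (n : ℕ) : ℂ := if n = 0 then 0 else ((n ! : ℂ))⁻¹

private lemma norm_bcoef_le (z : ℂ) (n : ℕ) : ‖bcoef z n‖ ≤ Real.exp ‖z‖ := by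
  have hfne : (0:ℝ) < (n ! : ℝ) := by exact_mod_cast Nat.factorial_pos n
  rw [bcoef, norm_div, Complex.norm_natCast]
  rw [div_le_iff₀ hfne]
  rw [Polynomial.bernoulli]
  rw [map_sum]
  calc ‖∑ i ∈ Finset.range (n+1), Polynomial.aeval z (Polynomial.monomial (n-i) ((bernoulli i) * (n.choose i : ℚ)))‖
      ≤ ∑ i ∈ Finset.range (n+1), ‖Polynomial.aeval z (Polynomial.monomial (n-i) ((bernoulli i) * (n.choose i : ℚ)))‖ :=
        norm_sum_le _ _
    _ ≤ ∑ i ∈ Finset.range (n+1), (n ! : ℝ) * (‖z‖^(n-i) / (n-i)!) := by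
        apply Finset.sum_le_sum
        intro i hi
        rw [Finset.mem_range] at hi
        rw [Polynomial.aeval_monomial, norm_mul, norm_pow]
        have hmap : ‖algebraMap ℚ ℂ (bernoulli i * (n.choose i : ℚ))‖
            = |((bernoulli i * (n.choose i : ℚ) : ℚ) : ℝ)| := by
          rw [show algebraMap ℚ ℂ (bernoulli i * (n.choose i : ℚ))
              = ((bernoulli i * (n.choose i : ℚ) : ℚ) : ℂ) from rfl, Complex.norm_ratCast]
        rw [hmap]
        have h1 : |((bernoulli i * (n.choose i : ℚ) : ℚ) : ℝ)| ≤ (i ! : ℝ) * (n.choose i : ℝ) := by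
          push_cast
          rw [abs_mul, Nat.abs_cast]
          exact mul_le_mul_of_nonneg_right (abs_bernoulli_le i) (by positivity)
        have h2 : (i ! : ℝ) * (n.choose i : ℝ) * ((n-i)! : ℝ) = (n ! : ℝ) := by
          have := Nat.choose_mul_factorial_mul_factorial (by omega : i ≤ n)
          have h3 : i ! * (n.choose i) * (n-i)! = n ! := by
            rw [← this]; ring
          exact_mod_cast h3
        have hfpos : (0:ℝ) < ((n-i)! : ℝ) := by exact_mod_cast Nat.factorial_pos (n-i)
        calc |((bernoulli i * (n.choose i : ℚ) : ℚ) : ℝ)| * ‖z‖^(n-i)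
            ≤ ((i ! : ℝ) * (n.choose i : ℝ)) * ‖z‖^(n-i) :=
              mul_le_mul_of_nonneg_right h1 (by positivity)
          _ = (n ! : ℝ) * (‖z‖^(n-i) / (n-i)!) := by
              rw [← h2]
              field_simp
    _ = (n ! : ℝ) * ∑ i ∈ Finset.range (n+1), (‖z‖^(n-i) / (n-i)!) := by rw [Finset.mul_sum]
    _ ≤ (n ! : ℝ) * Real.exp ‖z‖ := by
        apply mul_le_mul_of_nonneg_left _ (by positivity)
        calc ∑ i ∈ Finset.range (n+1), (‖z‖^(n-i) / (n-i)!)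
            = ∑ i ∈ Finset.range (n+1), (‖z‖^i / i !) := by
              rw [← Finset.sum_range_reflect]
              apply Finset.sum_congr rfl
              intro i hi
              rw [Finset.mem_range] at hi
              have hrw : n - (n+1-1-i) = i := by omega
              rw [hrw]
          _ ≤ Real.exp ‖z‖ := Real.sum_le_exp_of_nonneg (norm_nonneg z) _
    _ = Real.exp ‖z‖ * (n ! : ℝ) := by ring

private lemma coeff_recur (z : ℂ) (n : ℕ) :
    ∑ p ∈ Finset.HasAntidiagonal.antidiagonal n, bcoef z p.1 * dcoef p.2
      = if n = 0 then 0 else z^(n-1) / ((n-1)! : ℂ) := by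
  have h := congrArg (PowerSeries.coeff n) (Polynomial.bernoulli_generating_function (A := ℂ) z)
  rw [PowerSeries.coeff_mul] at h
  have hterm : ∀ p ∈ Finset.HasAntidiagonal.antidiagonal n,
      (PowerSeries.coeff p.1) (PowerSeries.mk fun m =>
          Polynomial.aeval z ((1 / m ! : ℚ) • Polynomial.bernoulli m))
        * (PowerSeries.coeff p.2) (PowerSeries.exp ℂ - 1)
      = bcoef z p.1 * dcoef p.2 := by
    intro p _
    congr 1
    · rw [PowerSeries.coeff_mk, map_smul, bcoef]
      rw [Algebra.smul_def]
      rw [show (algebraMap ℚ ℂ) (1 / (p.1)! : ℚ) = ((1 / (p.1)! : ℚ) : ℂ) from rfl]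
      push_cast
      ring
    · rw [map_sub, PowerSeries.coeff_exp, PowerSeries.coeff_one, dcoef]
      rw [show (algebraMap ℚ ℂ) (1 / (p.2)! : ℚ) = ((1 / (p.2)! : ℚ) : ℂ) from rfl]
      by_cases h2 : p.2 = 0
      · simp [h2]
      · rw [if_neg h2, if_neg h2]
        push_cast
        ring
  rw [Finset.sum_congr rfl hterm] at h
  rw [h]
  cases n with
  | zero => rw [if_pos rfl, PowerSeries.coeff_zero_X_mul]
  | succ k =>
    rw [if_neg (Nat.succ_ne_zero k)]
    rw [PowerSeries.coeff_succ_X_mul, PowerSeries.coeff_rescale, PowerSeries.coeff_exp]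
    rw [show (algebraMap ℚ ℂ) (1 / (k)! : ℚ) = ((1 / (k)! : ℚ) : ℂ) from rfl]
    push_cast
    ring

private lemma summable_bcoef (z t : ℂ) (ht : ‖t‖ < 1) :
    Summable fun n => ‖bcoef z n * t ^ n‖ := by
  apply Summable.of_nonneg_of_le (fun n => norm_nonneg _) (fun n => ?_)
    ((summable_geometric_of_lt_one (norm_nonneg t) ht).mul_left (Real.exp ‖z‖))
  rw [norm_mul, norm_pow]
  exact mul_le_mul_of_nonneg_right (norm_bcoef_le z n) (by positivity)

private lemma hasSum_dcoef (t : ℂ) (ht : ‖t‖ ≤ 1) :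
    HasSum (fun n => dcoef n * t ^ n) (Complex.exp t - 1) := by
  have h0 : HasSum (fun j : ℕ => t ^ j / (j)!) (Complex.exp t) := by
    rw [Complex.exp_eq_exp_ℂ]
    exact NormedSpace.expSeries_div_hasSum_exp t
  have h1 := h0.update 0 0
  have heq : Function.update (fun j : ℕ => t ^ j / (j)!) 0 0 = fun n => dcoef n * t ^ n := by
    funext n
    cases n with
    | zero => simp [Function.update, dcoef]
    | succ k =>
      rw [Function.update_of_ne (Nat.succ_ne_zero k), dcoef, if_neg (Nat.succ_ne_zero k)]
      rw [Nat.succ_eq_add_one, div_eq_mul_inv]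
      ring
  rw [heq] at h1
  convert h1 using 1
  · rfl
  simp
  ring

private lemma summable_dcoef (t : ℂ) (ht : ‖t‖ ≤ 1) :
    Summable fun n => ‖dcoef n * t ^ n‖ := by
  apply Summable.of_nonneg_of_le (fun n => norm_nonneg _) (fun n => ?_)
    (Real.summable_pow_div_factorial 1)
  rw [norm_mul, norm_pow]
  have h1 : ‖dcoef n‖ ≤ ((n)! : ℝ)⁻¹ := by
    rw [dcoef]
    split_ifs
    · simp
    · rw [norm_inv, Complex.norm_natCast]
  have h2 : ‖t‖^n ≤ 1 := pow_le_one₀ (norm_nonneg t) ht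
  calc ‖dcoef n‖ * ‖t‖^n ≤ ((n)! : ℝ)⁻¹ * 1 :=
        mul_le_mul h1 h2 (by positivity) (by positivity)
    _ = 1^n / (n)! := by rw [one_pow, mul_one, one_div]

private lemma gen_fun (z t : ℂ) (ht : ‖t‖ < 1) :
    (∑' n, bcoef z n * t ^ n) * (Complex.exp t - 1) = t * Complex.exp (z * t) := by
  have hprod := tsum_mul_tsum_eq_tsum_sum_antidiagonal_of_summable_norm
    (summable_bcoef z t ht) (summable_dcoef t ht.le)
  rw [(hasSum_dcoef t ht.le).tsum_eq] at hprod
  rw [hprod]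
  have hinner : ∀ n : ℕ, ∑ p ∈ Finset.HasAntidiagonal.antidiagonal n, (bcoef z p.1 * t^p.1) * (dcoef p.2 * t^p.2)
      = (if n = 0 then 0 else z^(n-1)/((n-1)! : ℂ)) * t^n := by
    intro n
    rw [← coeff_recur z n, Finset.sum_mul]
    apply Finset.sum_congr rfl
    intro p hp
    rw [Finset.HasAntidiagonal.mem_antidiagonal] at hp
    rw [← hp, pow_add]
    ring
  rw [tsum_congr hinner]
  apply HasSum.tsum_eq
  apply (hasSum_nat_add_iff' 1).mp
  have h0 : HasSum (fun j : ℕ => (z*t) ^ j / (j)!) (Complex.exp (z*t)) := by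
    rw [Complex.exp_eq_exp_ℂ]
    exact NormedSpace.expSeries_div_hasSum_exp (z*t)
  have h1 := h0.mul_left t
  convert h1 using 1
  · rfl
  · funext n
    rw [if_neg (Nat.succ_ne_zero n)]
    simp only [Nat.succ_sub_one, mul_pow]
    rw [pow_succ]
    ring
  · simp

noncomputable def tk (k : ℤ) : ℂ := 2 * (Real.pi : ℂ) * Complex.I * (k : ℂ)

noncomputable def Sm (m : ℕ) : Finset ℤ := (Finset.Icc (-(m+1 : ℤ)) (m+1 : ℤ)).erase 0

noncomputable def Efun : ℂ → ℂ := dslope Complex.exp 0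

noncomputable def Nfun (m : ℕ) (z t : ℂ) : ℂ :=
  t * Complex.exp (z * t) - ∑ k ∈ Sm m, tk k * Complex.exp (tk k * z) * Efun (t - tk k)

noncomputable def hfun (m : ℕ) (z t : ℂ) : ℂ :=
  if Complex.exp t = 1 then deriv (Nfun m z) t else Nfun m z t / (Complex.exp t - 1)

noncomputable def acoef (m : ℕ) (z : ℂ) (n : ℕ) : ℂ :=
  bcoef z n + ∑ k ∈ Sm m, Complex.exp (tk k * z) * ((tk k)⁻¹) ^ n

private lemma norm_tk (k : ℤ) : ‖tk k‖ = 2 * π * |(k : ℝ)| := by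
  rw [tk]
  simp only [norm_mul, Complex.norm_ofNat, Complex.norm_real, Complex.norm_I,
    Complex.norm_intCast]
  rw [Real.norm_eq_abs, abs_of_pos Real.pi_pos]
  push_cast
  ring

private lemma tk_ne_zero {k : ℤ} (hk : k ≠ 0) : tk k ≠ 0 := by
  intro h
  have := norm_tk k
  rw [h, norm_zero] at this
  have : |(k:ℝ)| = 0 := by
    have hpi := Real.pi_pos
    nlinarith [abs_nonneg (k:ℝ)]
  simp at this
  exact hk (by exact_mod_cast this)

private lemma tk_inj {k j : ℤ} (h : tk k = tk j) : k = j := by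
  rw [tk, tk] at h
  have h2 : (2 * (Real.pi:ℂ) * Complex.I) ≠ 0 := by
    simp [Complex.I_ne_zero, Real.pi_ne_zero, Complex.ofReal_eq_zero]
  have := mul_left_cancel₀ h2 h
  exact_mod_cast this

private lemma exp_tk (k : ℤ) : Complex.exp (tk k) = 1 :=
  Complex.exp_eq_one_iff.mpr ⟨k, by rw [tk]; ring⟩

private lemma exp_eq_one_iff_tk {t : ℂ} : Complex.exp t = 1 ↔ ∃ k : ℤ, t = tk k := by
  rw [Complex.exp_eq_one_iff]
  constructor
  · rintro ⟨k, hk⟩; exact ⟨k, by rw [hk, tk]; push_cast; ring⟩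
  · rintro ⟨k, hk⟩; exact ⟨k, by rw [hk, tk]; push_cast; ring⟩

private lemma Efun_zero : Efun 0 = 1 := by
  rw [Efun, dslope_same, Complex.deriv_exp, Complex.exp_zero]

private lemma Efun_ne {t : ℂ} (ht : t ≠ 0) : Efun t = (Complex.exp t - 1) / t := by
  rw [Efun, dslope_of_ne _ ht, slope_def_field, Complex.exp_zero, sub_zero]

private lemma analyticAt_exp (s : ℂ) : AnalyticAt ℂ Complex.exp s :=
  Complex.differentiable_exp.analyticAt s

private lemma analyticAt_Efun (s : ℂ) : AnalyticAt ℂ Efun s := by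
  by_cases hs : s = 0
  · subst hs
    obtain ⟨p, hp⟩ := analyticAt_exp 0
    exact (hp.has_fpower_series_dslope_fslope).analyticAt
  · have h1 : AnalyticAt ℂ (fun t => (Complex.exp t - 1) / t) s :=
      ((analyticAt_exp s).sub analyticAt_const).div analyticAt_id hs
    apply h1.congr
    filter_upwards [eventually_ne_nhds hs] with t ht
    rw [Efun_ne ht]

private lemma differentiable_Efun : Differentiable ℂ Efun :=
  fun s => (analyticAt_Efun s).differentiableAt

private lemma continuous_Efun : Continuous Efun := differentiable_Efun.continuous

private lemma Efun_eq_of_exp_one {t₀ t : ℂ} (h1 : Complex.exp t₀ = 1) (hne : t ≠ t₀) :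
    Efun (t - t₀) = (Complex.exp t - 1) / (t - t₀) := by
  rw [Efun_ne (sub_ne_zero.mpr hne), Complex.exp_sub, h1, div_one]

private lemma differentiable_Nfun (m : ℕ) (z : ℂ) : Differentiable ℂ (Nfun m z) := by
  apply Differentiable.sub
  · exact differentiable_id.mul (Complex.differentiable_exp.comp
      ((differentiable_const z).mul differentiable_id))
  · apply Differentiable.fun_sum
    intro k _
    exact (differentiable_const _).mul (differentiable_Efun.comp (differentiable_id.sub_const _))

private lemma analyticAt_Nfun (m : ℕ) (z t : ℂ) : AnalyticAt ℂ (Nfun m z) t :=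
  (differentiable_Nfun m z).analyticAt t

private lemma Nfun_vanish (m : ℕ) (z : ℂ) (k : ℤ) (hk : k ∈ Finset.Icc (-(m+1:ℤ)) (m+1:ℤ)) :
    Nfun m z (tk k) = 0 := by
  by_cases hk0 : k = 0
  · subst hk0
    have htk0 : tk 0 = 0 := by rw [tk]; simp
    rw [Nfun, htk0]
    rw [zero_mul, zero_sub, neg_eq_zero]
    apply Finset.sum_eq_zero
    intro j hj
    have hj0 : j ≠ 0 := (Finset.mem_erase.mp hj).1
    have : Efun (0 - tk j) = 0 := by
      have hne : (0:ℂ) - tk j ≠ 0 := by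
        rw [zero_sub, neg_ne_zero]
        exact tk_ne_zero hj0
      rw [Efun_ne hne, zero_sub, Complex.exp_neg, exp_tk j, inv_one, sub_self, zero_div]
    rw [this, mul_zero]
  · have hkSm : k ∈ Sm m := Finset.mem_erase.mpr ⟨hk0, hk⟩
    rw [Nfun]
    rw [Finset.sum_eq_single k]
    · rw [sub_self, Efun_zero, mul_one, mul_comm z (tk k)]
      ring
    · intro j hj hjk
      have : Efun (tk k - tk j) = 0 := by
        rw [Efun_eq_of_exp_one (exp_tk j) (fun h => hjk (tk_inj h).symm)]
        rw [exp_tk k, sub_self, zero_div]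
      rw [this, mul_zero]
    · intro h; exact absurd hkSm h

private lemma tk_sub (j k : ℤ) : tk j - tk k = tk (j - k) := by
  rw [tk, tk, tk]; push_cast; ring

private lemma differentiableAt_hfun (m : ℕ) (z t₀ : ℂ)
    (hin : ∀ k : ℤ, t₀ = tk k → k ∈ Finset.Icc (-(m+1:ℤ)) (m+1:ℤ)) :
    DifferentiableAt ℂ (hfun m z) t₀ := by
  by_cases hexp : Complex.exp t₀ = 1
  · obtain ⟨k, hk⟩ := exp_eq_one_iff_tk.mp hexp
    have hN0 : Nfun m z t₀ = 0 := by rw [hk]; exact Nfun_vanish m z k (hin k hk)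
    obtain ⟨p, hp⟩ := analyticAt_Nfun m z t₀
    have hnum : AnalyticAt ℂ (dslope (Nfun m z) t₀) t₀ :=
      hp.has_fpower_series_dslope_fslope.analyticAt
    have hden : AnalyticAt ℂ (fun t => Efun (t - t₀)) t₀ := by
      exact AnalyticAt.comp (by rw [sub_self]; exact analyticAt_Efun 0)
        (analyticAt_id.sub analyticAt_const)
    have hG : AnalyticAt ℂ (fun t => dslope (Nfun m z) t₀ t / Efun (t - t₀)) t₀ :=
      hnum.div hden (by rw [sub_self, Efun_zero]; exact one_ne_zero)
    apply hG.differentiableAt.congr_of_eventuallyEq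
    rw [Filter.EventuallyEq, Metric.eventually_nhds_iff]
    refine ⟨1, one_pos, fun {t} hdist => ?_⟩
    by_cases hte : t = t₀
    · subst hte
      rw [hfun, if_pos hexp, dslope_same, sub_self, Efun_zero, div_one]
    · have hexpt : Complex.exp t ≠ 1 := by
        intro habs
        obtain ⟨j, hj⟩ := exp_eq_one_iff_tk.mp habs
        have hjk : j ≠ k := by
          intro hjement
          exact hte (by rw [hj, hjement, ← hk])
        have hnorm : ‖t - t₀‖ = 2 * π * |((j - k : ℤ) : ℝ)| := by
          rw [hj, hk, tk_sub, norm_tk]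
        have habs1 : (1:ℝ) ≤ |((j - k : ℤ) : ℝ)| := by
          have h5 : (1:ℤ) ≤ |j - k| := Int.one_le_abs (sub_ne_zero.mpr hjk)
          have h6 : |((j - k : ℤ) : ℝ)| = (|j - k| : ℤ) := by
            rw [Int.cast_abs]
          rw [h6]
          exact_mod_cast h5
        have hdist' : ‖t - t₀‖ < 1 := by
          rw [← dist_eq_norm]
          exact hdist
        rw [hnorm] at hdist'
        nlinarith [Real.pi_gt_three]
      rw [hfun, if_neg hexpt]
      rw [dslope_of_ne _ hte, slope_def_field, hN0, sub_zero]
      rw [Efun_eq_of_exp_one hexp hte]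
      have h1 : t - t₀ ≠ 0 := sub_ne_zero.mpr hte
      have h2 : Complex.exp t - 1 ≠ 0 := sub_ne_zero.mpr hexpt
      field_simp
  · have hopen : ∀ᶠ t in nhds t₀, Complex.exp t ≠ 1 :=
      Complex.continuous_exp.continuousAt.eventually_ne hexp
    have hdiff : DifferentiableAt ℂ (fun t => Nfun m z t / (Complex.exp t - 1)) t₀ :=
      ((differentiable_Nfun m z) t₀).div
        ((Complex.differentiable_exp t₀).sub_const 1) (sub_ne_zero.mpr hexp)
    apply hdiff.congr_of_eventuallyEq
    filter_upwards [hopen] with t ht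
    rw [hfun, if_neg ht]

private lemma two_le_norm_tk {k : ℤ} (hk : k ≠ 0) : 2 ≤ ‖tk k‖ := by
  rw [norm_tk]
  have h1 : (1:ℝ) ≤ |(k:ℝ)| := by
    have h5 : (1:ℤ) ≤ |k| := Int.one_le_abs hk
    rw [← Int.cast_abs]
    exact_mod_cast h5
  nlinarith [Real.pi_gt_three]

private lemma hasSum_acoef (m : ℕ) (z t : ℂ) (ht : ‖t‖ < 1/2) :
    HasSum (fun n => acoef m z n * t ^ n)
      ((∑' n, bcoef z n * t ^ n)
        + ∑ k ∈ Sm m, Complex.exp (tk k * z) * (1 - t / tk k)⁻¹) := by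
  have hF : HasSum (fun n => bcoef z n * t ^ n) (∑' n, bcoef z n * t ^ n) :=
    (Summable.of_norm (summable_bcoef z t (by linarith))).hasSum
  have hgeom : ∀ k ∈ Sm m, HasSum (fun n => Complex.exp (tk k * z) * ((tk k)⁻¹) ^ n * t ^ n)
      (Complex.exp (tk k * z) * (1 - t / tk k)⁻¹) := by
    intro k hkm
    have hk0 : k ≠ 0 := (Finset.mem_erase.mp hkm).1
    have hlt : ‖t / tk k‖ < 1 := by
      rw [norm_div]
      have h2 := two_le_norm_tk hk0
      rw [div_lt_one (by linarith)]
      linarith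
    have hgs := (hasSum_geometric_of_norm_lt_one hlt).mul_left (Complex.exp (tk k * z))
    have hfun_eq : (fun n => Complex.exp (tk k * z) * ((tk k)⁻¹) ^ n * t ^ n)
        = fun n => Complex.exp (tk k * z) * (t / tk k) ^ n := by
      funext n
      rw [div_eq_mul_inv, mul_pow]
      ring
    rw [hfun_eq]
    exact hgs
  have hsum := hF.add (hasSum_sum hgeom)
  have heq : (fun n => bcoef z n * t ^ n
      + ∑ k ∈ Sm m, Complex.exp (tk k * z) * ((tk k)⁻¹) ^ n * t ^ n)
      = fun n => acoef m z n * t ^ n := by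
    funext n
    rw [acoef, add_mul, Finset.sum_mul]
  rwa [heq] at hsum

private lemma hfun_eq_tsum (m : ℕ) (z t : ℂ) (ht0 : t ≠ 0) (ht : ‖t‖ < 1/2) :
    hfun m z t = ∑' n, acoef m z n * t ^ n := by
  rw [(hasSum_acoef m z t ht).tsum_eq]
  have hexpt : Complex.exp t ≠ 1 := by
    intro habs
    obtain ⟨k, hk⟩ := exp_eq_one_iff_tk.mp habs
    have hk0 : k ≠ 0 := by
      intro h
      apply ht0
      rw [hk, h, tk]
      simp
    have := two_le_norm_tk hk0
    rw [← hk] at this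
    linarith
  rw [hfun, if_neg hexpt]
  rw [div_eq_iff (sub_ne_zero.mpr hexpt)]
  rw [Nfun, add_mul, gen_fun z t (by linarith)]
  have hterm : ∀ k ∈ Sm m,
      Complex.exp (tk k * z) * (1 - t / tk k)⁻¹ * (Complex.exp t - 1)
        = -(tk k * Complex.exp (tk k * z) * Efun (t - tk k)) := by
    intro k hkm
    have hk0 : k ≠ 0 := (Finset.mem_erase.mp hkm).1
    have h1 : tk k ≠ 0 := tk_ne_zero hk0
    have htne : t ≠ tk k := by
      intro h
      have := two_le_norm_tk hk0
      rw [← h] at this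
      linarith
    have h2 : t - tk k ≠ 0 := sub_ne_zero.mpr htne
    have h3 : 1 - t / tk k ≠ 0 := by
      rw [sub_ne_zero]
      intro h
      apply h2
      rw [eq_comm, div_eq_iff h1] at h
      rw [h]
      ring
    have h2' : tk k - t ≠ 0 := fun h => h2 (by linear_combination -h)
    rw [Efun_eq_of_exp_one (exp_tk k) htne]
    field_simp
    ring
  rw [Finset.sum_mul, Finset.sum_congr rfl hterm]
  rw [Finset.sum_neg_distrib]
  ring

private lemma norm_acoef_le (m : ℕ) (z : ℂ) (n : ℕ) :
    ‖acoef m z n‖ ≤ Real.exp ‖z‖ + ∑ k ∈ Sm m, Real.exp ‖tk k * z‖ := by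
  rw [acoef]
  apply le_trans (norm_add_le _ _)
  apply add_le_add (norm_bcoef_le z n)
  apply le_trans (norm_sum_le _ _)
  apply Finset.sum_le_sum
  intro k hkm
  have hk0 : k ≠ 0 := (Finset.mem_erase.mp hkm).1
  rw [norm_mul, norm_pow, norm_inv]
  have h1 : ‖Complex.exp (tk k * z)‖ ≤ Real.exp ‖tk k * z‖ := by
    rw [Complex.norm_exp]
    exact Real.exp_le_exp.mpr (Complex.re_le_norm _)
  have h2 : ‖tk k‖⁻¹ ^ n ≤ 1 := by
    apply pow_le_one₀ (by positivity)
    rw [inv_le_one_iff₀]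
    right
    linarith [two_le_norm_tk hk0]
  calc ‖Complex.exp (tk k * z)‖ * ‖tk k‖⁻¹ ^ n
      ≤ Real.exp ‖tk k * z‖ * 1 := by
        apply mul_le_mul h1 h2 (by positivity) (by positivity)
    _ = Real.exp ‖tk k * z‖ := mul_one _

private lemma cauchy_coeff_eq (m : ℕ) (z : ℂ) {R : ℝ≥0} (hR : 0 < R)
    (hdiff : DifferentiableOn ℂ (hfun m z) (Metric.closedBall 0 R)) :
    cauchyPowerSeries (hfun m z) 0 R = FormalMultilinearSeries.ofScalars ℂ (acoef m z) := by
  have hball := hdiff.hasFPowerSeriesOnBall hR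
  set q := FormalMultilinearSeries.ofScalars ℂ (acoef m z) with hqdef
  set A := Real.exp ‖z‖ + ∑ k ∈ Sm m, Real.exp ‖tk k * z‖ with hA
  have hrad : ((1/2 : ℝ≥0) : ℝ≥0∞) ≤ q.radius := by
    apply FormalMultilinearSeries.le_radius_of_bound _ A
    intro n
    rw [hqdef, FormalMultilinearSeries.ofScalars_norm]
    calc ‖acoef m z n‖ * ((1/2 : ℝ≥0) : ℝ)^n ≤ A * 1 := by
          apply mul_le_mul (norm_acoef_le m z n)
            (pow_le_one₀ (by positivity) (by norm_num)) (by positivity)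
          positivity
      _ = A := mul_one _
  have hq : HasFPowerSeriesOnBall (fun t => ∑' n, acoef m z n * t ^ n) q 0
      ((1/2 : ℝ≥0) : ℝ≥0∞) := by
    constructor
    · exact hrad
    · simp
    · intro y hy
      rw [mem_emetric_ball_zero_iff] at hy
      have hy' : ‖y‖ < 1/2 := by
        have := ENNReal.coe_lt_coe.mp hy
        calc ‖y‖ = (‖y‖₊ : ℝ) := rfl
        _ < ((1/2 : ℝ≥0) : ℝ) := by exact_mod_cast this
        _ = 1/2 := by norm_num
      have hs := hasSum_acoef m z y hy'
      have : HasSum (fun n => acoef m z n * y ^ n) (∑' n, acoef m z n * y ^ n) :=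
        hs.tsum_eq ▸ hs
      rw [zero_add]
      simp only [hqdef, FormalMultilinearSeries.ofScalars_apply_eq, smul_eq_mul]
      exact this
  have hqat := hq.hasFPowerSeriesAt
  have hfreq : hfun m z =ᶠ[nhds 0] (fun t => ∑' n, acoef m z n * t ^ n) := by
    apply (AnalyticAt.frequently_eq_iff_eventually_eq hball.analyticAt hqat.analyticAt).mp
    apply Filter.Eventually.frequently
    rw [eventually_nhdsWithin_iff]
    filter_upwards [Metric.ball_mem_nhds (0:ℂ) (by norm_num : (0:ℝ) < 1/2)] with t htb htne
    have ht0 : t ≠ 0 := by simpa using htne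
    have htn : ‖t‖ < 1/2 := by
      rw [Metric.mem_ball, dist_zero_right] at htb
      exact htb
    exact hfun_eq_tsum m z t ht0 htn
  exact (hball.hasFPowerSeriesAt).eq_formalMultilinearSeries (hqat.congr hfreq.symm)

theorem bernoulli_poly_asymptotic (m : ℕ) (hm : 1 ≤ m) (K : Set ℂ) (hK : IsCompact K) :
    ∃ C > 0, ∀ n : ℕ, 2 ≤ n → ∀ z ∈ K,
      ‖(2 * Real.pi * Complex.I) ^ n *
            Polynomial.aeval z (Polynomial.bernoulli n) / (n.factorial : ℂ)
          + ∑ k ∈ (Finset.Icc (-(m : ℤ)) (m : ℤ)).erase 0,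
              Complex.exp (2 * Real.pi * Complex.I * k * z) / (k : ℂ) ^ n‖
        ≤ C * Real.exp (2 * Real.pi * (m + 1) * ‖z‖) / (m + 1 : ℝ) ^ n := by
  have hπ := Real.pi_pos
  set R : ℝ := π * (2*m+3) with hRdef
  have hRpos : 0 < R := by positivity
  set Rnn : ℝ≥0 := ⟨R, hRpos.le⟩ with hRnndef
  have hRnnR : (Rnn : ℝ) = R := rfl
  have hRnnpos : 0 < Rnn := by
    rw [← NNReal.coe_lt_coe, hRnnR]
    exact hRpos
  -- exp ≠ 1 on the circle of radius R
  have hsphere : ∀ t : ℂ, ‖t‖ = R → Complex.exp t ≠ 1 := by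
    intro t htR habs
    obtain ⟨k, hk⟩ := exp_eq_one_iff_tk.mp habs
    rw [hk, norm_tk] at htR
    have h3 : π * (2*|(k:ℝ)|) = π * (2*(m:ℝ)+3) := by rw [hRdef] at htR; linarith
    have h2 : 2*|(k:ℝ)| = 2*(m:ℝ)+3 := mul_left_cancel₀ (ne_of_gt hπ) h3
    rw [← Int.cast_abs] at h2
    have h4 : (2 * |k| : ℤ) = 2*(m:ℤ)+3 := by exact_mod_cast h2
    rcases abs_cases k with ⟨h5, h6⟩ | ⟨h5, h6⟩ <;> omega
  -- points in the closed ball where exp = 1 have small index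
  have hin : ∀ t : ℂ, ‖t‖ ≤ R → ∀ k : ℤ, t = tk k → k ∈ Finset.Icc (-(m+1:ℤ)) (m+1:ℤ) := by
    intro t htR k hk
    rw [hk, norm_tk] at htR
    have h2 : 2*|(k:ℝ)| ≤ 2*(m:ℝ)+3 := by
      rw [hRdef] at htR
      nlinarith
    rw [← Int.cast_abs] at h2
    have h4 : (2*|k| : ℤ) ≤ 2*(m:ℤ)+3 := by exact_mod_cast h2
    rw [Finset.mem_Icc]
    rcases abs_cases k with ⟨h5, h6⟩ | ⟨h5, h6⟩ <;> omega
  have hdiffOn : ∀ z : ℂ, DifferentiableOn ℂ (hfun m z) (Metric.closedBall 0 (Rnn:ℝ)) := by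
    intro z t htmem
    apply DifferentiableAt.differentiableWithinAt
    apply differentiableAt_hfun
    intro k hk
    apply hin t ?_ k hk
    rw [Metric.mem_closedBall, dist_zero_right] at htmem
    rw [← hRnnR]
    exact htmem
  -- uniform bound on K × sphere
  have hNcont : Continuous (fun p : ℂ × ℂ => Nfun m p.1 p.2) := by
    simp only [Nfun]
    apply Continuous.sub
    · exact continuous_snd.mul (Complex.continuous_exp.comp (continuous_fst.mul continuous_snd))
    · apply continuous_finset_sum
      intro k _
      have hE : Continuous fun p : ℂ × ℂ => Efun (p.2 - tk k) :=
        continuous_Efun.comp (continuous_snd.sub continuous_const)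
      exact (continuous_const.mul
        (Complex.continuous_exp.comp (continuous_const.mul continuous_fst))).mul hE
  have hcont : ContinuousOn (fun p : ℂ × ℂ => Nfun m p.1 p.2 / (Complex.exp p.2 - 1))
      (K ×ˢ Metric.sphere (0:ℂ) R) := by
    apply ContinuousOn.div hNcont.continuousOn
      ((Complex.continuous_exp.comp continuous_snd).sub continuous_const).continuousOn
    rintro ⟨z, t⟩ hp
    have ht : t ∈ Metric.sphere (0:ℂ) R := hp.2
    rw [Metric.mem_sphere, dist_zero_right] at ht
    exact sub_ne_zero.mpr (hsphere t ht)
  obtain ⟨C₀, hC₀⟩ := (hK.prod (isCompact_sphere (0:ℂ) R)).exists_bound_of_continuousOn hcont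
  set C1 : ℝ := max C₀ 0 with hC1def
  have hC1nonneg : 0 ≤ C1 := le_max_right _ _
  -- coefficient bound
  have hcoefb : ∀ z ∈ K, ∀ n : ℕ, ‖acoef m z n‖ ≤ C1 * (R⁻¹)^n := by
    intro z hz n
    have heq := cauchy_coeff_eq m z hRnnpos (hdiffOn z)
    have hnorm := norm_cauchyPowerSeries_le (hfun m z) 0 (Rnn:ℝ) n
    rw [heq, FormalMultilinearSeries.ofScalars_norm] at hnorm
    have hcm : ∀ θ : ℝ, ‖circleMap 0 R θ‖ = R := by
      intro θ
      rw [norm_circleMap_zero, abs_of_pos hRpos]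
    have hfcirc : ∀ θ : ℝ, hfun m z (circleMap 0 R θ)
        = Nfun m z (circleMap 0 R θ) / (Complex.exp (circleMap 0 R θ) - 1) := by
      intro θ
      rw [hfun, if_neg (hsphere _ (hcm θ))]
    have hcont2 : Continuous fun θ : ℝ => ‖hfun m z (circleMap 0 R θ)‖ := by
      apply Continuous.norm
      rw [show (fun θ : ℝ => hfun m z (circleMap 0 R θ))
          = fun θ => Nfun m z (circleMap 0 R θ) / (Complex.exp (circleMap 0 R θ) - 1)
          from funext hfcirc]
      apply Continuous.div
      · exact (differentiable_Nfun m z).continuous.comp (continuous_circleMap 0 R)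
      · exact (Complex.continuous_exp.comp (continuous_circleMap 0 R)).sub continuous_const
      · intro θ
        exact sub_ne_zero.mpr (hsphere _ (hcm θ))
    have hIb : (∫ θ in (0:ℝ)..2*π, ‖hfun m z (circleMap 0 R θ)‖) ≤ (2*π - 0) * C1 := by
      have := intervalIntegral.integral_mono_on (μ := MeasureTheory.volume)
        Real.two_pi_pos.le (hcont2.intervalIntegrable 0 (2*π))
        (intervalIntegrable_const (c := C1)) (fun θ _ => by
          rw [hfcirc θ]
          calc ‖Nfun m z (circleMap 0 R θ) / (Complex.exp (circleMap 0 R θ) - 1)‖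
              ≤ C₀ := hC₀ (z, circleMap 0 R θ)
                (Set.mk_mem_prod hz (by rw [Metric.mem_sphere, dist_zero_right]; exact hcm θ))
            _ ≤ C1 := le_max_left _ _)
      rwa [intervalIntegral.integral_const, smul_eq_mul] at this
    calc ‖acoef m z n‖
        ≤ ((2*π)⁻¹ * ∫ θ in (0:ℝ)..2*π, ‖hfun m z (circleMap 0 (Rnn:ℝ) θ)‖) * |(Rnn:ℝ)|⁻¹^n :=
          hnorm
      _ ≤ ((2*π)⁻¹ * ((2*π - 0) * C1)) * |(Rnn:ℝ)|⁻¹^n := by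
          apply mul_le_mul_of_nonneg_right _ (by positivity)
          apply mul_le_mul_of_nonneg_left _ (by positivity)
          rw [hRnnR]
          exact hIb
      _ = C1 * (R⁻¹)^n := by
          rw [hRnnR, abs_of_pos hRpos]
          field_simp
          ring
  refine ⟨C1 + 2, by linarith, ?_⟩
  intro n hn z hz
  -- decompose Sm m
  have h2πI : (2*(π:ℂ)*Complex.I) ≠ 0 := by
    simp [Complex.I_ne_zero, Real.pi_ne_zero, Complex.ofReal_eq_zero]
  have hSm : Sm m = insert ((m:ℤ)+1) (insert (-((m:ℤ)+1))
      ((Finset.Icc (-(m:ℤ)) (m:ℤ)).erase 0)) := by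
    ext j
    simp only [Sm, Finset.mem_erase, Finset.mem_Icc, Finset.mem_insert]
    omega
  have hnot1 : ((m:ℤ)+1) ∉ insert (-((m:ℤ)+1)) ((Finset.Icc (-(m:ℤ)) (m:ℤ)).erase 0) := by
    simp only [Finset.mem_insert, Finset.mem_erase, Finset.mem_Icc]
    omega
  have hnot2 : (-((m:ℤ)+1)) ∉ (Finset.Icc (-(m:ℤ)) (m:ℤ)).erase 0 := by
    simp only [Finset.mem_erase, Finset.mem_Icc]
    omega
  have hterm : ∀ k ∈ Sm m, (2*(π:ℂ)*Complex.I)^n * (Complex.exp (tk k * z) * ((tk k)⁻¹)^n)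
      = Complex.exp (tk k * z) * (((k:ℂ))⁻¹)^n := by
    intro k hkm
    have hk0 : k ≠ 0 := (Finset.mem_erase.mp hkm).1
    have hkC : (k:ℂ) ≠ 0 := Int.cast_ne_zero.mpr hk0
    have hmulinv : (2*(π:ℂ)*Complex.I) * (tk k)⁻¹ = ((k:ℂ))⁻¹ := by
      rw [tk]
      field_simp
    calc (2*(π:ℂ)*Complex.I)^n * (Complex.exp (tk k * z) * ((tk k)⁻¹)^n)
        = Complex.exp (tk k * z) * ((2*(π:ℂ)*Complex.I) * (tk k)⁻¹)^n := by
          rw [mul_pow]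
          ring
      _ = Complex.exp (tk k * z) * (((k:ℂ))⁻¹)^n := by rw [hmulinv]
  have hkey : (2*(π:ℂ)*Complex.I)^n * acoef m z n
      = (2*(π:ℂ)*Complex.I)^n * Polynomial.aeval z (Polynomial.bernoulli n) / (n.factorial : ℂ)
        + ((∑ k ∈ (Finset.Icc (-(m:ℤ)) (m:ℤ)).erase 0,
            Complex.exp (tk k * z) * (((k:ℂ))⁻¹)^n)
          + Complex.exp (tk ((m:ℤ)+1) * z) * ((((m:ℤ)+1 : ℤ) : ℂ))⁻¹^n
          + Complex.exp (tk (-((m:ℤ)+1)) * z) * (((-((m:ℤ)+1) : ℤ) : ℂ))⁻¹^n) := by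
    rw [acoef, mul_add, bcoef, Finset.mul_sum]
    rw [Finset.sum_congr rfl hterm]
    rw [hSm, Finset.sum_insert hnot1, Finset.sum_insert hnot2]
    push_cast
    ring
  -- rewrite the goal expression
  have hgoalsum : ∀ k ∈ (Finset.Icc (-(m:ℤ)) (m:ℤ)).erase 0,
      Complex.exp (2 * Real.pi * Complex.I * k * z) / (k : ℂ) ^ n
        = Complex.exp (tk k * z) * (((k:ℂ))⁻¹)^n := by
    intro k _
    rw [tk, div_eq_mul_inv, inv_pow]
  rw [Finset.sum_congr rfl hgoalsum]
  have hstep : (2 * (Real.pi:ℂ) * Complex.I) ^ n *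
        Polynomial.aeval z (Polynomial.bernoulli n) / (n.factorial : ℂ)
      + ∑ k ∈ (Finset.Icc (-(m:ℤ)) (m:ℤ)).erase 0, Complex.exp (tk k * z) * (((k:ℂ))⁻¹)^n
      = (2*(π:ℂ)*Complex.I)^n * acoef m z n
        - Complex.exp (tk ((m:ℤ)+1) * z) * ((((m:ℤ)+1 : ℤ) : ℂ))⁻¹^n
        - Complex.exp (tk (-((m:ℤ)+1)) * z) * (((-((m:ℤ)+1) : ℤ) : ℂ))⁻¹^n := by
    rw [hkey]
    ring
  rw [hstep]
  -- norm estimates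
  have hexpb : ∀ j : ℤ, |(j:ℝ)| = (m:ℝ)+1 →
      ‖Complex.exp (tk j * z)‖ ≤ Real.exp (2*π*((m:ℝ)+1)*‖z‖) := by
    intro j hj
    rw [Complex.norm_exp]
    apply Real.exp_le_exp.mpr
    calc (tk j * z).re ≤ ‖tk j * z‖ := Complex.re_le_norm _
      _ = ‖tk j‖ * ‖z‖ := norm_mul _ _
      _ = 2*π*((m:ℝ)+1) * ‖z‖ := by
          rw [norm_tk, hj]
  have hm1pos : (0:ℝ) < (m:ℝ)+1 := by positivity
  have habs1 : |(((m:ℤ)+1 : ℤ) : ℝ)| = (m:ℝ)+1 := by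
    rw [abs_of_pos (by exact_mod_cast hm1pos)]
    push_cast
    ring
  have habs2 : |((-((m:ℤ)+1) : ℤ) : ℝ)| = (m:ℝ)+1 := by
    push_cast
    rw [abs_neg, abs_of_pos hm1pos]
  have hnormpow : ∀ j : ℤ, |(j:ℝ)| = (m:ℝ)+1 → ‖(((j : ℤ)):ℂ)⁻¹^n‖ = ((m:ℝ)+1)⁻¹^n := by
    intro j hj
    rw [norm_pow, norm_inv, Complex.norm_intCast, ← Int.cast_abs]
    rw [show ((|j| : ℤ) : ℝ) = |(j:ℝ)| from by push_cast; ring, hj]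
  have hexp1le : (1:ℝ) ≤ Real.exp (2*π*((m:ℝ)+1)*‖z‖) :=
    Real.one_le_exp (by positivity)
  calc ‖(2*(π:ℂ)*Complex.I)^n * acoef m z n
        - Complex.exp (tk ((m:ℤ)+1) * z) * ((((m:ℤ)+1 : ℤ) : ℂ))⁻¹^n
        - Complex.exp (tk (-((m:ℤ)+1)) * z) * (((-((m:ℤ)+1) : ℤ) : ℂ))⁻¹^n‖
      ≤ ‖(2*(π:ℂ)*Complex.I)^n * acoef m z n
          - Complex.exp (tk ((m:ℤ)+1) * z) * ((((m:ℤ)+1 : ℤ) : ℂ))⁻¹^n‖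
        + ‖Complex.exp (tk (-((m:ℤ)+1)) * z) * (((-((m:ℤ)+1) : ℤ) : ℂ))⁻¹^n‖ :=
        norm_sub_le _ _
    _ ≤ ‖(2*(π:ℂ)*Complex.I)^n * acoef m z n‖
        + ‖Complex.exp (tk ((m:ℤ)+1) * z) * ((((m:ℤ)+1 : ℤ) : ℂ))⁻¹^n‖
        + ‖Complex.exp (tk (-((m:ℤ)+1)) * z) * (((-((m:ℤ)+1) : ℤ) : ℂ))⁻¹^n‖ := by
        apply add_le_add_left (norm_sub_le _ _)
    _ ≤ C1 * Real.exp (2*π*((m:ℝ)+1)*‖z‖) * ((m:ℝ)+1)⁻¹^n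
        + Real.exp (2*π*((m:ℝ)+1)*‖z‖) * ((m:ℝ)+1)⁻¹^n
        + Real.exp (2*π*((m:ℝ)+1)*‖z‖) * ((m:ℝ)+1)⁻¹^n := by
        apply add_le_add
        apply add_le_add
        · -- main term
          rw [norm_mul, norm_pow]
          have h2πn : ‖2*(π:ℂ)*Complex.I‖ = 2*π := by
            simp [abs_of_pos hπ]
          rw [h2πn]
          calc (2*π)^n * ‖acoef m z n‖
              ≤ (2*π)^n * (C1 * (R⁻¹)^n) := by
                apply mul_le_mul_of_nonneg_left (hcoefb z hz n) (by positivity)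
            _ = C1 * ((2*π*R⁻¹))^n := by
                rw [mul_pow]
                ring
            _ ≤ C1 * ((m:ℝ)+1)⁻¹^n := by
                apply mul_le_mul_of_nonneg_left _ hC1nonneg
                apply pow_le_pow_left₀ (by positivity)
                rw [hRdef]
                have h1 : 2*π*(π*(2*(m:ℝ)+3))⁻¹ = 2/(2*(m:ℝ)+3) := by
                  rw [eq_div_iff (by positivity)]
                  field_simp
                rw [h1, inv_eq_one_div, div_le_div_iff₀ (by positivity) hm1pos]
                linarith
            _ ≤ C1 * Real.exp (2*π*((m:ℝ)+1)*‖z‖) * ((m:ℝ)+1)⁻¹^n := by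
                have := mul_le_mul_of_nonneg_right
                  (mul_le_mul_of_nonneg_left hexp1le hC1nonneg)
                  (by positivity : (0:ℝ) ≤ ((m:ℝ)+1)⁻¹^n)
                rw [mul_one] at this
                exact this
        · rw [norm_mul, hnormpow _ habs1]
          exact mul_le_mul_of_nonneg_right (hexpb _ habs1) (by positivity)
        · rw [norm_mul, hnormpow _ habs2]
          exact mul_le_mul_of_nonneg_right (hexpb _ habs2) (by positivity)
    _ = (C1 + 2) * Real.exp (2*π*((m:ℝ)+1)*‖z‖) * ((m:ℝ)+1)⁻¹^n := by ring
    _ = (C1 + 2) * Real.exp (2*Real.pi*((m:ℝ)+1)*‖z‖) / ((m:ℝ)+1)^n := by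
        rw [inv_pow]
        ring
end

section
/- Let λ ∈ ℂ with λ ≠ −1. Then for every integer n ≥ 0 and every x ∈ ℂ, 𝓔_n(x;λ) = −(2/(n+1))·𝓑_{n+1}(x;−λ). -/
noncomputable def AEnum (lam : ℂ) : ℕ → ℂ
  | 0 => 2 / (lam + 1)
  | n + 1 =>
    (-lam * ∑ k ∈ (Finset.range (n + 1)).attach,
        (((n + 1).choose k.1 : ℕ) : ℂ) * AEnum lam k.1) / (lam + 1)
decreasing_by exact Finset.mem_range.mp k.2

/-- The Apostol–Euler polynomial `𝓔_n(x;λ)`. -/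
noncomputable def AEpoly (lam : ℂ) (n : ℕ) (x : ℂ) : ℂ :=
  ∑ k ∈ Finset.range (n + 1), ((n.choose k : ℕ) : ℂ) * AEnum lam k * x ^ (n - k)

lemma ABnum_succ (lam : ℂ) (n : ℕ) :
    ABnum lam (n + 1) =
      ((if n = 0 then 1 else 0) -
        lam * ∑ k ∈ Finset.range (n + 1), (((n + 1).choose k : ℕ) : ℂ) * ABnum lam k) /
        (lam - 1) := by
  rw [ABnum]
  congr 2
  exact congrArg (lam * ·) (Finset.sum_attach (Finset.range (n + 1))
    (fun k => (((n + 1).choose k : ℕ) : ℂ) * ABnum lam k))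

lemma AEnum_succ (lam : ℂ) (n : ℕ) :
    AEnum lam (n + 1) =
      (-lam * ∑ k ∈ Finset.range (n + 1), (((n + 1).choose k : ℕ) : ℂ) * AEnum lam k) /
        (lam + 1) := by
  rw [AEnum]
  congr 2
  exact Finset.sum_attach (Finset.range (n + 1))
    (fun k => (((n + 1).choose k : ℕ) : ℂ) * AEnum lam k)

lemma key_s14 (lam : ℂ) (hlam : lam ≠ -1) :
    ∀ n : ℕ, AEnum lam n = -(2 / ((n : ℂ) + 1)) * ABnum (-lam) (n + 1) := by
  have h1 : lam + 1 ≠ 0 := fun h => hlam (by linear_combination h)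
  intro n
  induction n using Nat.strong_induction_on with
  | _ n ih =>
    match n with
    | 0 =>
      have hz : ABnum (-lam) 0 = 0 := by rw [ABnum]
      rw [ABnum_succ, show AEnum lam 0 = 2 / (lam + 1) from by rw [AEnum],
        show -lam - 1 = -(lam + 1) from by ring]
      simp [Finset.sum_range_one, hz]
      rw [show (-1 + -lam : ℂ) = -(lam + 1) from by ring, inv_neg]
      ring
    | m + 1 =>
      have hm2 : ((m : ℂ) + 1 + 1) ≠ 0 := by
        have := Nat.cast_ne_zero (R := ℂ).mpr (Nat.succ_ne_zero (m + 1))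
        push_cast at this
        exact this
      have hz : ABnum (-lam) 0 = 0 := by rw [ABnum]
      rw [AEnum_succ, ABnum_succ]
      rw [Finset.sum_range_succ'
        (fun k => (((m + 1 + 1).choose k : ℕ) : ℂ) * ABnum (-lam) k) (m + 1)]
      rw [hz]
      have hsum : ∑ k ∈ Finset.range (m + 1),
            (((m + 1 + 1).choose (k + 1) : ℕ) : ℂ) * ABnum (-lam) (k + 1)
          = (((m : ℂ) + 2) / (-2)) *
            ∑ k ∈ Finset.range (m + 1), (((m + 1).choose k : ℕ) : ℂ) * AEnum lam k := by
        rw [Finset.mul_sum]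
        apply Finset.sum_congr rfl
        intro k hk
        rw [ih k (Finset.mem_range.mp hk)]
        have hb : (((m : ℕ) + 2) * (m + 1).choose k : ℕ)
            = ((m + 1 + 1).choose (k + 1) * (k + 1) : ℕ) := Nat.add_one_mul_choose_eq (m + 1) k
        have hbC : ((m : ℂ) + 2) * (((m + 1).choose k : ℕ) : ℂ)
            = (((m + 1 + 1).choose (k + 1) : ℕ) : ℂ) * ((k : ℂ) + 1) := by
          exact_mod_cast congrArg (Nat.cast : ℕ → ℂ) hb
        have hk1 : ((k : ℂ) + 1) ≠ 0 := Nat.cast_add_one_ne_zero k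
        rw [show ((m : ℂ) + 2) / (-2) *
            ((((m + 1).choose k : ℕ) : ℂ) * (-(2 / ((k : ℂ) + 1)) * ABnum (-lam) (k + 1)))
          = ((m : ℂ) + 2) * (((m + 1).choose k : ℕ) : ℂ) * ABnum (-lam) (k + 1) * ((k : ℂ) + 1)⁻¹
          from by ring]
        rw [mul_assoc ((m : ℂ) + 2) _ _, ← mul_assoc, hbC,
          show (((m + 1 + 1).choose (k + 1) : ℕ) : ℂ) * ((k : ℂ) + 1) * ABnum (-lam) (k + 1) *
              ((k : ℂ) + 1)⁻¹
            = (((m + 1 + 1).choose (k + 1) : ℕ) : ℂ) * ABnum (-lam) (k + 1) *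
              (((k : ℂ) + 1) * ((k : ℂ) + 1)⁻¹) from by ring,
          mul_inv_cancel₀ hk1, mul_one]
      rw [hsum, show -lam - 1 = -(lam + 1) from by ring]
      simp only [if_neg (Nat.succ_ne_zero m)]
      push_cast
      simp only [mul_zero, add_zero, zero_sub, div_neg, neg_neg]
      rw [show ((m : ℂ) + 1 + 1) = (m : ℂ) + 2 from by ring]
      have hm2' : ((m : ℂ) + 2) ≠ 0 := by rwa [show ((m : ℂ) + 1 + 1) = (m : ℂ) + 2 from by ring] at hm2
      field_simp

theorem apostol_euler_eq_apostol_bernoulli (lam : ℂ) (hlam : lam ≠ -1) (n : ℕ) (x : ℂ) :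
    AEpoly lam n x = -(2 / ((n : ℂ) + 1)) * ABpoly (-lam) (n + 1) x := by
  have h1 : lam + 1 ≠ 0 := fun h => hlam (by linear_combination h)
  have hn1 : ((n : ℂ) + 1) ≠ 0 := Nat.cast_add_one_ne_zero n
  unfold AEpoly ABpoly
  have hz : ABnum (-lam) 0 = 0 := by rw [ABnum]
  rw [Finset.sum_range_succ'
    (fun k => (((n + 1).choose k : ℕ) : ℂ) * ABnum (-lam) k * x ^ (n + 1 - k)) (n + 1)]
  rw [hz]
  simp only [mul_zero, zero_mul, add_zero]
  rw [Finset.mul_sum]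
  apply Finset.sum_congr rfl
  intro k hk
  rw [key_s14 lam hlam k]
  have hb : (((n : ℕ) + 1) * n.choose k : ℕ) = ((n + 1).choose (k + 1) * (k + 1) : ℕ) :=
    Nat.add_one_mul_choose_eq n k
  have hbC : ((n : ℂ) + 1) * ((n.choose k : ℕ) : ℂ)
      = (((n + 1).choose (k + 1) : ℕ) : ℂ) * ((k : ℂ) + 1) := by
    exact_mod_cast congrArg (Nat.cast : ℕ → ℂ) hb
  have hk1 : ((k : ℂ) + 1) ≠ 0 := Nat.cast_add_one_ne_zero k
  have hexp : n + 1 - (k + 1) = n - k := by omega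
  rw [hexp]
  field_simp
  linear_combination (-(ABnum (-lam) (k + 1) * x ^ (n - k))) * hbC
end
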